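/- arXiv:1112.3719 — 4 statements merged into one kernel-verified Lean document; each statement's English description precedes it below -/
import Mathlib

section
/- The 2k-fold self-convolution identity of Catalan numbers: for positive integers r and n with r <= n, the sum over all compositions i_1 + ... + i_r = n of positive integers of the product C_{i_1 - 1} * ... * C_{i_r - 1} equals (r/(2n-r)) * binomial(2n-r, n). -/
open Finset


/-- Ballot numbers. -/
def bal (r n : ℕ) : ℤ :=
  if r = 0 then (if n = 0 then 1 else 0)
  else if r ≤ n then ((2*n - r - 1).choose (n-1) : ℤ) - (2*n - r - 1).choose n
  else 0

lemma bal_zero (n : ℕ) : bal 0 n = if n = 0 then 1 else 0 := by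
  simp [bal]

lemma catalan_ballot (d : ℕ) :
    (catalan d : ℤ) = ((2*d).choose d : ℤ) - (2*d).choose (d+1) := by
  have h := succ_mul_catalan_eq_centralBinom d
  rw [Nat.centralBinom] at h
  have h2 : (2*d).choose (d+1) * (d+1) = (2*d).choose d * d := by
    have h3 := Nat.choose_succ_right_eq (2*d) d
    have h4 : 2*d - d = d := by omega
    rwa [h4] at h3
  have hne : ((d : ℤ) + 1) ≠ 0 := by positivity
  apply mul_left_cancel₀ hne
  have h' : ((d:ℤ)+1) * catalan d = (2*d).choose d := by exact_mod_cast h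
  have h2' : ((2*d).choose (d+1) : ℤ) * (d+1) = (2*d).choose d * d := by exact_mod_cast h2
  linarith [h', h2']

lemma bal_eq (s d : ℕ) :
    bal (s+1) (s+1+d) = ((s+2*d).choose (s+d) : ℤ) - (s+2*d).choose (s+d+1) := by
  simp only [bal]
  rw [if_neg (by omega), if_pos (by omega)]
  have h1 : 2*(s+1+d) - (s+1) - 1 = s + 2*d := by omega
  have h2 : s+1+d-1 = s+d := by omega
  have h3 : s+1+d = s+d+1 := by omega
  rw [h1, h2, h3]

lemma bal_zero_of_lt {r n : ℕ} (h : n < r) : bal r n = 0 := by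
  simp only [bal]
  rw [if_neg (by omega), if_neg (by omega)]

lemma bal_one (n : ℕ) : bal 1 n = if 1 ≤ n then (catalan (n-1) : ℤ) else 0 := by
  rcases Nat.eq_zero_or_pos n with rfl | hn
  · simp [bal_zero_of_lt]
  · obtain ⟨d, rfl⟩ : ∃ d, n = 0 + 1 + d := ⟨n - 1, by omega⟩
    rw [bal_eq, if_pos (by omega), catalan_ballot]
    norm_num

private lemma key (X a : ℕ) :
    ((X.choose (a+1) : ℤ) - X.choose (a+2))
      = (((X+1).choose (a+1) : ℤ) - (X+1).choose (a+2))
        - ((X.choose a : ℤ) - X.choose (a+1)) := by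
  have p1 := Nat.choose_succ_succ X a
  have p2 := Nat.choose_succ_succ X (a+1)
  push_cast [p1, p2]
  push_cast [show a.succ = a + 1 from rfl, show (a+1).succ = a+2 from rfl] at *
  linarith

lemma bal_rec (s m : ℕ) (h : 1 ≤ s ∨ 1 ≤ m) :
    bal (s+2) m = bal (s+1) m - bal s (m-1) := by
  rcases lt_or_ge m (s+2) with hm | hm
  · rcases Nat.lt_or_ge m (s+1) with hm2 | hm2
    · rcases Nat.eq_zero_or_pos s with rfl | hs
      · interval_cases m
        · omega
      · rw [bal_zero_of_lt (by omega), bal_zero_of_lt (by omega), bal_zero_of_lt (by omega)]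
        ring
    · have hm3 : m = s + 1 := by omega
      subst hm3
      rw [bal_zero_of_lt (by omega)]
      rcases Nat.eq_zero_or_pos s with rfl | hs
      · simp [bal]
      · obtain ⟨t, rfl⟩ : ∃ t, s = t + 1 := ⟨s - 1, by omega⟩
        have e1 : bal (t+1+1) (t+1+1) = 1 := by
          have := bal_eq (t+1) 0
          simp at this
          simp [this, Nat.choose_eq_zero_of_lt]
        have e2 : bal (t+1) (t+1+1-1) = 1 := by
          have := bal_eq t 0
          simp at this
          simp [this, Nat.choose_eq_zero_of_lt]
        rw [e1, e2]; ring
  · obtain ⟨d, rfl⟩ : ∃ d, m = s + 2 + d := ⟨m - (s+2), by omega⟩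
    have e1 : bal (s+2) (s+2+d) = ((s+2*d+1).choose (s+d+1) : ℤ) - (s+2*d+1).choose (s+d+2) := by
      have := bal_eq (s+1) d
      rw [show s+1+1+d = s+2+d by ring, show s+1+2*d = s+2*d+1 by ring,
        show s+1+d = s+d+1 by ring, show s+d+1+1 = s+d+2 by ring] at this
      exact this
    have e2 : bal (s+1) (s+2+d) = ((s+2*d+1+1).choose (s+d+1) : ℤ) - (s+2*d+1+1).choose (s+d+2) := by
      have := bal_eq s (d+1)
      rw [show s+1+(d+1) = s+2+d by ring, show s+2*(d+1) = s+2*d+1+1 by ring,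
        show s+(d+1)+1 = s+d+2 by ring, show s+(d+1) = s+d+1 by ring] at this
      exact this
    have e3 : bal s (s+2+d-1) = ((s+2*d+1).choose (s+d) : ℤ) - (s+2*d+1).choose (s+d+1) := by
      rw [show s+2+d-1 = s+1+d by omega]
      rcases Nat.eq_zero_or_pos s with rfl | hs
      · -- bal 0 (1+d) = 0, and RHS is 0 by symmetry
        rw [show bal 0 (0+1+d) = 0 by simp [bal]]
        have psymm : (2*d+1).choose d = (2*d+1).choose (d+1) := by
          have := Nat.choose_symm (n := 2*d+1) (k := d+1) (by omega)
          rwa [show 2*d+1-(d+1) = d by omega] at this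
        simp [psymm]
      · obtain ⟨t, rfl⟩ : ∃ t, s = t + 1 := ⟨s - 1, by omega⟩
        have htt := bal_eq t (d+1)
        rw [show t+1+1+d = t+1+(d+1) by ring, show t+1+2*d+1 = t+2*(d+1) by ring,
          show t+1+d+1 = t+(d+1)+1 by ring, show t+1+d = t+(d+1) by ring]
        exact htt
    rw [e1, e2, e3]
    exact key (s+2*d+1) (s+d)
lemma conv (r : ℕ) : ∀ n, ∑ i ∈ Finset.range n, (catalan i : ℤ) * bal r (n-1-i) = bal (r+1) n := by
  induction r using Nat.strong_induction_on with
  | _ r ih =>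
  match r with
  | 0 =>
    intro n
    rcases Nat.eq_zero_or_pos n with rfl | hn
    · simp [bal_one]
    · have hterm : ∀ i ∈ Finset.range n, (catalan i : ℤ) * bal 0 (n-1-i)
          = if i = n-1 then (catalan i : ℤ) else 0 := by
        intro i hi
        simp only [Finset.mem_range] at hi
        by_cases hie : i = n-1
        · subst hie
          rw [show n-1-(n-1) = 0 by omega, bal_zero, if_pos rfl, if_pos rfl, mul_one]
        · rw [bal_zero, if_neg (by omega), if_neg hie, mul_zero]
      rw [Finset.sum_congr rfl hterm, Finset.sum_ite_eq' (Finset.range n) (n-1),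
        if_pos (Finset.mem_range.mpr (by omega)), bal_one, if_pos (show 1 ≤ n by omega)]
  | 1 =>
    intro n
    match n with
    | 0 => simp [bal_zero_of_lt]
    | 1 =>
      simp only [Finset.range_one, Finset.sum_singleton]
      rw [show 1-1-0 = 0 by omega, bal_one, if_neg (by omega), mul_zero,
        bal_zero_of_lt (by omega)]
    | (k+2) =>
      rw [Finset.sum_range_succ, show k+2-1-(k+1) = 0 by omega, bal_one, if_neg (by omega),
        mul_zero, add_zero]
      have hterm : ∀ i ∈ Finset.range (k+1), (catalan i : ℤ) * bal 1 (k+2-1-i)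
          = (catalan i : ℤ) * catalan (k-i) := by
        intro i hi
        simp only [Finset.mem_range] at hi
        rw [show k+2-1-i = k+1-i by omega, bal_one, if_pos (by omega),
          show k+1-i-1 = k-i by omega]
      rw [Finset.sum_congr rfl hterm]
      have hc : (catalan (k+1) : ℤ) = ∑ i ∈ Finset.range (k+1), (catalan i : ℤ) * catalan (k-i) := by
        rw [catalan_succ k]
        push_cast
        rw [← Fin.sum_univ_eq_sum_range (fun i => (catalan i : ℤ) * catalan (k-i)) (k+1)]
      rw [← hc]
      rw [show (2:ℕ) = 0+2 by rfl, bal_rec 0 (k+2) (Or.inr (by omega)), bal_zero,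
        if_neg (by omega), bal_one, if_pos (by omega), show k+2-1 = k+1 by omega]
      ring
  | (t+2) =>
    intro n
    match n with
    | 0 => simp [bal_zero_of_lt]
    | (k+1) =>
      rw [Finset.sum_range_succ, show k+1-1-k = 0 by omega, bal_zero_of_lt (by omega),
        mul_zero, add_zero]
      have hterm : ∀ i ∈ Finset.range k, (catalan i : ℤ) * bal (t+2) (k+1-1-i)
          = (catalan i : ℤ)*bal (t+1) (k-i) - (catalan i : ℤ)*bal t (k-1-i) := by
        intro i hi
        simp only [Finset.mem_range] at hi
        rw [show k+1-1-i = k-i by omega, bal_rec t (k-i) (Or.inr (by omega)),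
          show k-i-1 = k-1-i by omega, mul_sub]
      rw [Finset.sum_congr rfl hterm, Finset.sum_sub_distrib]
      have h1 : ∑ i ∈ Finset.range k, (catalan i : ℤ) * bal (t+1) (k-i) = bal (t+2) (k+1) := by
        have := ih (t+1) (by omega) (k+1)
        rw [Finset.sum_range_succ, show k+1-1-k = 0 by omega, bal_zero_of_lt (by omega),
          mul_zero, add_zero] at this
        rw [← this]
        exact Finset.sum_congr rfl fun i hi => by
          simp only [Finset.mem_range] at hi
          rw [show k+1-1-i = k-i by omega]
      have h2 : ∑ i ∈ Finset.range k, (catalan i : ℤ) * bal t (k-1-i) = bal (t+1) k :=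
        ih t (by omega) k
      rw [h1, h2, bal_rec (t+1) (k+1) (Or.inl (by omega)), show k+1-1 = k by omega]

def T : ℕ → ℕ → ℕ
  | 0, n => if n = 0 then 1 else 0
  | (r+1), n => ∑ i ∈ Finset.range n, catalan i * T r (n-1-i)

lemma T_eq_bal (r n : ℕ) : (T r n : ℤ) = bal r n := by
  induction r generalizing n with
  | zero =>
    rw [bal_zero, T]
    split <;> simp
  | succ t iht =>
    have h : (T (t+1) n : ℤ) = ∑ i ∈ Finset.range n, (catalan i : ℤ) * bal t (n-1-i) := by
      rw [T]
      push_cast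
      exact Finset.sum_congr rfl fun i _ => by rw [iht]
    rw [h, conv]
open Classical in
noncomputable def U (r N n : ℕ) : ℕ :=
  ∑ f ∈ (Finset.univ : Finset (Fin r → Fin (N+1))).filter
      (fun f => (∀ j, 1 ≤ (f j).val) ∧ ∑ j, (f j).val = n),
    ∏ j, catalan ((f j).val - 1)

lemma U_zero (N n : ℕ) : U 0 N n = if n = 0 then 1 else 0 := by
  rw [U, Finset.sum_filter]
  simp only [Finset.univ_unique, Finset.sum_singleton]
  simp only [Finset.univ_eq_empty, Finset.sum_empty, Finset.prod_empty]
  split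
  · rename_i h
    rw [if_pos]
    omega
  · rename_i h
    rw [if_neg]
    intro hc
    exact h ⟨fun j => j.elim0, by simp [hc]⟩

lemma U_congr {r N M n : ℕ} (hN : n ≤ N) (hM : n ≤ M) : U r N n = U r M n := by
  rw [U, U]
  refine Finset.sum_nbij'
    (fun f j => (⟨(f j).val % (M+1), Nat.mod_lt _ (Nat.succ_pos _)⟩ : Fin (M+1)))
    (fun g j => (⟨(g j).val % (N+1), Nat.mod_lt _ (Nat.succ_pos _)⟩ : Fin (N+1)))
    ?_ ?_ ?_ ?_ ?_
  · intro f hf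
    simp only [Finset.mem_filter, Finset.mem_univ, true_and] at hf ⊢
    obtain ⟨h1, h2⟩ := hf
    have hle : ∀ j, (f j).val ≤ n := fun j =>
      h2 ▸ Finset.single_le_sum (f := fun j => (f j).val) (fun i _ => Nat.zero_le _) (Finset.mem_univ j)
    have hmod : ∀ j, (f j).val % (M+1) = (f j).val := fun j =>
      Nat.mod_eq_of_lt (by have := hle j; omega)
    refine ⟨fun j => by simp only [hmod]; exact h1 j, ?_⟩
    simp only [hmod]; exact h2
  · intro g hg
    simp only [Finset.mem_filter, Finset.mem_univ, true_and] at hg ⊢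
    obtain ⟨h1, h2⟩ := hg
    have hle : ∀ j, (g j).val ≤ n := fun j =>
      h2 ▸ Finset.single_le_sum (f := fun j => (g j).val) (fun i _ => Nat.zero_le _) (Finset.mem_univ j)
    have hmod : ∀ j, (g j).val % (N+1) = (g j).val := fun j =>
      Nat.mod_eq_of_lt (by have := hle j; omega)
    refine ⟨fun j => by simp only [hmod]; exact h1 j, ?_⟩
    simp only [hmod]; exact h2
  · intro f hf
    simp only [Finset.mem_filter, Finset.mem_univ, true_and] at hf
    obtain ⟨h1, h2⟩ := hf
    have hle : ∀ j, (f j).val ≤ n := fun j =>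
      h2 ▸ Finset.single_le_sum (f := fun j => (f j).val) (fun i _ => Nat.zero_le _) (Finset.mem_univ j)
    funext j
    apply Fin.ext
    simp only
    rw [Nat.mod_eq_of_lt (show ((f j):ℕ) < M+1 by have := hle j; omega),
      Nat.mod_eq_of_lt (f j).isLt]
  · intro g hg
    simp only [Finset.mem_filter, Finset.mem_univ, true_and] at hg
    obtain ⟨h1, h2⟩ := hg
    have hle : ∀ j, (g j).val ≤ n := fun j =>
      h2 ▸ Finset.single_le_sum (f := fun j => (g j).val) (fun i _ => Nat.zero_le _) (Finset.mem_univ j)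
    funext j
    apply Fin.ext
    simp only
    rw [Nat.mod_eq_of_lt (show ((g j):ℕ) < N+1 by have := hle j; omega),
      Nat.mod_eq_of_lt (g j).isLt]
  · intro f hf
    simp only [Finset.mem_filter, Finset.mem_univ, true_and] at hf
    obtain ⟨h1, h2⟩ := hf
    have hle : ∀ j, (f j).val ≤ n := fun j =>
      h2 ▸ Finset.single_le_sum (f := fun j => (f j).val) (fun i _ => Nat.zero_le _) (Finset.mem_univ j)
    refine Finset.prod_congr rfl fun j _ => ?_
    simp only [Nat.mod_eq_of_lt (show (f j).val < M+1 by have := hle j; omega)]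

open Classical in
lemma U_peel (r N n : ℕ) (hn : n ≤ N) :
    U (r+1) N n = ∑ i ∈ Finset.range n, catalan i * U r N (n-1-i) := by
  have key : ∀ x : Fin (N+1),
      (∑ h : Fin r → Fin (N+1),
        if ((1 ≤ x.val ∧ ∀ j, 1 ≤ (h j).val) ∧ x.val + ∑ j, (h j).val = n) then
          catalan (x.val-1) * ∏ j, catalan ((h j).val-1) else 0)
      = if 1 ≤ x.val ∧ x.val ≤ n then catalan (x.val-1) * U r N (n-x.val) else 0 := by
    intro x
    by_cases hx : 1 ≤ x.val ∧ x.val ≤ n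
    · rw [if_pos hx, U, Finset.sum_filter, Finset.mul_sum]
      refine Finset.sum_congr rfl fun h _ => ?_
      rw [mul_ite, mul_zero]
      refine if_congr ?_ rfl rfl
      constructor
      · rintro ⟨⟨_, hq⟩, hs⟩
        exact ⟨hq, by omega⟩
      · rintro ⟨hq, hs⟩
        exact ⟨⟨hx.1, hq⟩, by omega⟩
    · rw [if_neg hx]
      refine Finset.sum_eq_zero fun h _ => ?_
      rw [if_neg]
      rintro ⟨⟨h1, _⟩, h3⟩
      exact hx ⟨h1, by omega⟩
  calc U (r+1) N n
      = ∑ f : Fin (r+1) → Fin (N+1),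
          if ((∀ j, 1 ≤ (f j).val) ∧ ∑ j, (f j).val = n) then
            ∏ j, catalan ((f j).val - 1) else 0 := by
        rw [U, Finset.sum_filter]
    _ = ∑ p : Fin (N+1) × (Fin r → Fin (N+1)),
          (fun f : Fin (r+1) → Fin (N+1) =>
            if ((∀ j, 1 ≤ (f j).val) ∧ ∑ j, (f j).val = n) then
              ∏ j, catalan ((f j).val - 1) else 0)
          ((Fin.consEquiv (fun _ => Fin (N+1))) p) :=
        (Equiv.sum_comp (Fin.consEquiv (fun _ => Fin (N+1))) _).symm
    _ = ∑ x : Fin (N+1), ∑ h : Fin r → Fin (N+1),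
          if ((1 ≤ x.val ∧ ∀ j, 1 ≤ (h j).val) ∧ x.val + ∑ j, (h j).val = n) then
            catalan (x.val-1) * ∏ j, catalan ((h j).val-1) else 0 := by
        rw [Fintype.sum_prod_type]
        refine Finset.sum_congr rfl fun x _ => Finset.sum_congr rfl fun h _ => ?_
        simp only [Fin.consEquiv_apply, Fin.forall_fin_succ, Fin.sum_univ_succ, Fin.prod_univ_succ,
          Fin.cons_zero, Fin.cons_succ]
    _ = ∑ x : Fin (N+1),
          (if 1 ≤ x.val ∧ x.val ≤ n then catalan (x.val-1) * U r N (n-x.val) else 0) :=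
        Finset.sum_congr rfl fun x _ => key x
    _ = ∑ v ∈ Finset.range (N+1),
          (if 1 ≤ v ∧ v ≤ n then catalan (v-1) * U r N (n-v) else 0) :=
        Fin.sum_univ_eq_sum_range (fun v => if 1 ≤ v ∧ v ≤ n then catalan (v-1) * U r N (n-v) else 0) (N+1)
    _ = ∑ v ∈ Finset.range (n+1),
          (if 1 ≤ v ∧ v ≤ n then catalan (v-1) * U r N (n-v) else 0) := by
        refine (Finset.sum_subset (Finset.range_subset_range.mpr (by omega)) ?_).symm
        intro v _ hv
        simp only [Finset.mem_range] at hv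
        rw [if_neg]
        rintro ⟨_, h2⟩
        omega
    _ = ∑ i ∈ Finset.range n,
          (if 1 ≤ i+1 ∧ i+1 ≤ n then catalan (i+1-1) * U r N (n-(i+1)) else 0)
        + (if 1 ≤ 0 ∧ 0 ≤ n then catalan (0-1) * U r N (n-0) else 0) :=
        Finset.sum_range_succ' _ n
    _ = ∑ i ∈ Finset.range n, catalan i * U r N (n-1-i) := by
        rw [if_neg (by omega), add_zero]
        refine Finset.sum_congr rfl fun i hi => ?_
        simp only [Finset.mem_range] at hi
        rw [if_pos ⟨by omega, by omega⟩, show i+1-1 = i by omega, show n-(i+1) = n-1-i by omega]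

lemma UT (r : ℕ) : ∀ n, U r n n = T r n := by
  induction r with
  | zero =>
    intro n
    rw [U_zero, T]
  | succ t ih =>
    intro n
    rw [U_peel t n n le_rfl, T]
    refine Finset.sum_congr rfl fun i hi => ?_
    simp only [Finset.mem_range] at hi
    rw [U_congr (show n-1-i ≤ n by omega) (le_rfl : n-1-i ≤ n-1-i), ih (n-1-i)]

lemma final_identity (r n : ℕ) (hr : 1 ≤ r) (hrn : r ≤ n) :
    ((2*n - r : ℕ) : ℤ) * bal r n = r * ((2*n-r).choose n : ℤ) := by
  obtain ⟨t, rfl⟩ : ∃ t, r = t+1 := ⟨r-1, by omega⟩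
  obtain ⟨d, rfl⟩ : ∃ d, n = t+1+d := ⟨n-(t+1), by omega⟩
  rw [bal_eq t d, show 2*(t+1+d) - (t+1) = t+2*d+1 by omega, show t+1+d = t+d+1 by omega]
  have f1 := Nat.add_one_mul_choose_eq (t+2*d) (t+d)
  have f2 := Nat.choose_mul_succ_eq (t+2*d) (t+d+1)
  simp only [Nat.succ_eq_add_one, show t+2*d+1-(t+d+1) = d by omega] at f1 f2
  have f1' : ((t:ℤ)+2*d+1) * (t+2*d).choose (t+d) = (t+2*d+1).choose (t+d+1) * (t+d+1) := by
    exact_mod_cast f1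
  have f2' : ((t+2*d).choose (t+d+1) : ℤ) * (t+2*d+1) = (t+2*d+1).choose (t+d+1) * d := by
    exact_mod_cast f2
  push_cast
  linarith [f1', f2']


open Classical in
/-- The `r`-fold self-convolution identity of Catalan numbers: for positive
integers `r ≤ n`, the sum over all compositions `i₁ + ⋯ + i_r = n` of positive
integers of `C_{i₁-1} ⋯ C_{i_r-1}` equals `(r/(2n-r)) C(2n-r, n)`
(stated multiplied through by `2n - r > 0`). -/
theorem catalan_self_convolution (r n : ℕ) (hr : 1 ≤ r) (hrn : r ≤ n) :
    (2*n - r) *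
      ∑ f ∈ (Finset.univ : Finset (Fin r → Fin (n+1))).filter
          (fun f => (∀ j, 1 ≤ (f j).val) ∧ ∑ j, (f j).val = n),
        ∏ j, catalan ((f j).val - 1)
    = r * Nat.choose (2*n - r) n := by
  have h1 : (∑ f ∈ (Finset.univ : Finset (Fin r → Fin (n+1))).filter
          (fun f => (∀ j, 1 ≤ (f j).val) ∧ ∑ j, (f j).val = n),
        ∏ j, catalan ((f j).val - 1)) = U r n n := rfl
  rw [h1, UT r n]
  have h2 : (((2*n-r) * T r n : ℕ) : ℤ) = ((r * Nat.choose (2*n-r) n : ℕ) : ℤ) := by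
    push_cast
    rw [T_eq_bal r n]
    have := final_identity r n hr hrn
    push_cast at this
    linarith
  exact_mod_cast h2
end

section
/- For integers k >= v >= 1, the quantity (2k/(2v)) * sum over nonnegative integers s_1 + s_2 + ... + s_{2v} = k - v of C_{s_1} C_{s_2} ... C_{s_{2v}} equals binomial(2k, k-v). -/
open Finset

open PowerSeries

noncomputable def catS : ℕ⟦X⟧ := PowerSeries.mk catalan

lemma catS_eq : catS = 1 + X * catS ^ 2 := by
  ext n
  cases n with
  | zero => simp [catS, coeff_zero_eq_constantCoeff, constantCoeff_X]
  | succ n =>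
    rw [map_add, coeff_succ_X_mul, sq, coeff_mul]
    simp [catS, coeff_one, catalan_succ']

lemma coeff_catS_pow (n m : ℕ) :
    PowerSeries.coeff m (catS ^ n) =
      ∑ f ∈ Finset.Nat.antidiagonalTuple n m, ∏ i, catalan (f i) := by
  induction n generalizing m with
  | zero =>
    cases m with
    | zero => simp [Finset.Nat.antidiagonalTuple_zero_zero]
    | succ m => simp [Finset.Nat.antidiagonalTuple_zero_succ, coeff_one]
  | succ n ih =>
    rw [pow_succ', coeff_mul]
    simp_rw [ih]
    simp_rw [catS, coeff_mk]
    rw [Finset.sum_congr rfl (fun p _ => Finset.mul_sum _ _ _), Finset.sum_sigma']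
    refine Finset.sum_nbij' (fun x => Fin.cons x.1.1 x.2)
      (fun g => ⟨(g 0, ∑ i, g (Fin.succ i)), Fin.tail g⟩) ?_ ?_ ?_ ?_ ?_
    · rintro ⟨⟨a, b⟩, f⟩ hx
      simp only [Finset.mem_sigma, Finset.mem_antidiagonal,
        Finset.Nat.mem_antidiagonalTuple] at hx ⊢
      rw [Fin.sum_univ_succ]
      simp only [Fin.cons_zero, Fin.cons_succ]
      rw [hx.2]; exact Finset.HasAntidiagonal.mem_antidiagonal.mp hx.1
    · intro g hg
      simp only [Finset.Nat.mem_antidiagonalTuple, Fin.sum_univ_succ] at hg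
      simp only [Finset.mem_sigma, Finset.mem_antidiagonal,
        Finset.Nat.mem_antidiagonalTuple, Fin.tail]
      exact ⟨Finset.HasAntidiagonal.mem_antidiagonal.mpr hg, trivial⟩
    · rintro ⟨⟨a, b⟩, f⟩ hx
      simp only [Finset.mem_sigma, Finset.mem_antidiagonal,
        Finset.Nat.mem_antidiagonalTuple] at hx
      simp only [Fin.cons_zero, Fin.tail_cons]
      congr 1
      simp [Fin.cons_succ, hx.2]
    · intro g hg
      exact Fin.cons_self_tail g
    · rintro ⟨⟨a, b⟩, f⟩ hx
      simp [Fin.prod_univ_succ, Fin.cons_succ]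

noncomputable def catSum (n m : ℕ) : ℕ := PowerSeries.coeff m (catS ^ n)

lemma catSum_zero_right (n : ℕ) : catSum n 0 = 1 := by
  rw [catSum, coeff_catS_pow, Finset.Nat.antidiagonalTuple_zero_right]
  simp

lemma catSum_zero_left (m : ℕ) : catSum 0 (m + 1) = 0 := by
  rw [catSum, coeff_catS_pow, Finset.Nat.antidiagonalTuple_zero_succ]
  simp

lemma catSum_rec (n m : ℕ) :
    catSum (n + 1) (m + 1) = catSum n (m + 1) + catSum (n + 2) m := by
  unfold catSum
  have h : catS ^ (n + 1) = catS ^ n + X * catS ^ (n + 2) := by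
    calc catS ^ (n + 1) = catS ^ n * catS := pow_succ _ _
      _ = catS ^ n * (1 + X * catS ^ 2) := by rw [← catS_eq]
      _ = catS ^ n + X * catS ^ (n + 2) := by ring
  rw [h, map_add, coeff_succ_X_mul]

lemma catSum_one (n : ℕ) : catSum n 1 = n := by
  induction n with
  | zero => exact catSum_zero_left 0
  | succ n ih => rw [catSum_rec, ih, catSum_zero_right]

lemma catSum_diff : ∀ m n : ℕ,
    catSum (n + 1) (m + 1) + (2 * m + n + 2).choose m = (2 * m + n + 2).choose (m + 1) := by
  intro m
  induction m with
  | zero =>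
    intro n
    simp [catSum_one]
  | succ m ihm =>
    intro n
    induction n with
    | zero =>
      have h1 := ihm 1
      rw [catSum_rec, catSum_zero_left]
      rw [show 2 * m + 1 + 2 = 2 * m + 3 by omega] at h1
      have e3 : (2 * m + 3).choose (m + 2) = (2 * m + 3).choose (m + 1) := by
        have h := Nat.choose_symm (show m + 2 ≤ 2 * m + 3 by omega)
        rw [show 2 * m + 3 - (m + 2) = m + 1 by omega] at h
        exact h.symm
      have e1 : (2 * (m + 1) + 0 + 2).choose (m + 1 + 1)
          = (2 * m + 3).choose (m + 1) + (2 * m + 3).choose (m + 2) := by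
        have := Nat.choose_succ_succ (2 * m + 3) (m + 1)
        convert this using 2 <;> omega
      have e2 : (2 * (m + 1) + 0 + 2).choose (m + 1)
          = (2 * m + 3).choose m + (2 * m + 3).choose (m + 1) := by
        have := Nat.choose_succ_succ (2 * m + 3) m
        convert this using 2 <;> omega
      ring_nf at h1 e1 e2 e3 ⊢
      omega
    | succ n ihn =>
      have h1 := ihm (n + 2)
      rw [catSum_rec]
      have e1 : (2 * (m + 1) + (n + 1) + 2).choose (m + 1 + 1)
          = (2 * m + n + 4).choose (m + 1) + (2 * m + n + 4).choose (m + 2) := by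
        have := Nat.choose_succ_succ (2 * m + n + 4) (m + 1)
        convert this using 2 <;> omega
      have e2 : (2 * (m + 1) + (n + 1) + 2).choose (m + 1)
          = (2 * m + n + 4).choose m + (2 * m + n + 4).choose (m + 1) := by
        have := Nat.choose_succ_succ (2 * m + n + 4) m
        convert this using 2 <;> omega
      ring_nf at h1 ihn e1 e2 ⊢
      omega

lemma catSum_mul (n m : ℕ) :
    (2 * (m : ℕ) + n + 1) * catSum (n + 1) m = (n + 1) * (2 * m + n + 1).choose m := by
  cases m with
  | zero => simp [catSum_zero_right]
  | succ m =>
    have h1 := catSum_diff m n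
    have h2 := Nat.choose_succ_right_eq (2 * m + n + 2) m
    have h3 := Nat.choose_succ_succ (2 * m + n + 2) m
    rw [show 2 * m + n + 2 - m = m + n + 2 by omega] at h2
    rw [show 2 * (m + 1) + n + 1 = 2 * m + n + 3 by omega]
    rw [show (2 * m + n + 3) = (2 * m + n + 2) + 1 by omega]
    rw [show (m + 1) = m + 1 by rfl]
    zify at h1 h2 h3 ⊢
    linear_combination (2 * (m : ℤ) + n + 3) * h1 + 2 * h2 - ((n : ℤ) + 1) * h3

lemma catSum_mul' (n m : ℕ) (hn : 1 ≤ n) :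
    (2 * m + n) * catSum n m = n * (2 * m + n).choose m := by
  obtain ⟨n, rfl⟩ := Nat.exists_eq_add_of_le hn
  rw [Nat.add_comm 1 n, ← Nat.add_assoc]
  exact catSum_mul n m

open Classical in
/-- For `k ≥ v ≥ 1`, `(2k/(2v)) ∑_{s₁+⋯+s_{2v} = k-v} C_{s₁} ⋯ C_{s_{2v}}
= C(2k, k-v)` (stated multiplied through by `2v > 0`): the number of ways to
place `2k - 2v` vertices in non-crossing, non-dividing pairs around a partial
pairing of `2v` vertices on a circle of `2k` positions. -/
theorem placements_eq_choose (k v : ℕ) (hv : 1 ≤ v) (hvk : v ≤ k) :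
    2*k *
      ∑ f ∈ (Finset.univ : Finset (Fin (2*v) → Fin (k - v + 1))).filter
          (fun f => ∑ j, (f j).val = k - v),
        ∏ j, catalan (f j).val
    = 2*v * Nat.choose (2*k) (k - v) := by
  set M := k - v with hM
  have hbij :
      ∑ f ∈ (Finset.univ : Finset (Fin (2*v) → Fin (M+1))).filter
          (fun f => ∑ j, (f j).val = M),
        ∏ j, catalan (f j).val
      = ∑ g ∈ Finset.Nat.antidiagonalTuple (2*v) M, ∏ j, catalan (g j) := by
    refine Finset.sum_nbij' (fun f j => (f j).val)
      (fun g j => (⟨min (g j) M, by omega⟩ : Fin (M+1))) ?_ ?_ ?_ ?_ ?_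
    · intro f hf
      simp only [Finset.mem_filter, Finset.mem_univ, true_and] at hf
      simpa [Finset.Nat.mem_antidiagonalTuple] using hf
    · intro g hg
      simp only [Finset.Nat.mem_antidiagonalTuple] at hg
      have hle : ∀ j, g j ≤ M := by
        intro j
        rw [← hg]
        exact Finset.single_le_sum (fun _ _ => Nat.zero_le _) (Finset.mem_univ j)
      simp only [Finset.mem_filter, Finset.mem_univ, true_and]
      calc ∑ j, min (g j) M = ∑ j, g j := by
            exact Finset.sum_congr rfl fun j _ => min_eq_left (hle j)
        _ = M := hg
    · intro f hf
      funext j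
      exact Fin.ext (by simp [Nat.min_eq_left (Nat.lt_succ_iff.mp (f j).isLt)])
    · intro g hg
      simp only [Finset.Nat.mem_antidiagonalTuple] at hg
      have hle : ∀ j, g j ≤ M := by
        intro j
        rw [← hg]
        exact Finset.single_le_sum (fun _ _ => Nat.zero_le _) (Finset.mem_univ j)
      funext j
      simp [Nat.min_eq_left (hle j)]
    · intro f hf
      rfl
  rw [hbij, ← coeff_catS_pow, ← catSum]
  have h := catSum_mul' (2*v) M (by clear hbij; omega)
  rw [show 2*M + 2*v = 2*k by clear hbij h; omega] at h
  exact h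
end

section
/- In a uniformly random perfect matching of 2k vertices on a circle (k >= 2), the probability that a fixed vertex is involved in a crossing equals (2k-3)/(2k-1) - (1/(2k-1)) * sum_{m=2}^{k-1} binomial(k-2, m-2) / binomial(2k-3, 2m-3). -/
open Finset

/-- A pairing (perfect matching) of `n` vertices on a circle, encoded as a
fixed-point-free involution. -/
def IsPairing {n : ℕ} (f : Fin n → Fin n) : Prop :=
  (∀ i, f (f i) = i) ∧ ∀ i, f i ≠ i

/-- `x` lies strictly between `a` and `b` going clockwise around the circle. -/
def CircBtw {n : ℕ} (a b x : Fin n) : Prop :=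
  0 < (x - a).val ∧ (x - a).val < (b - a).val

/-- The chord through `i` and the chord through `j` cross: exactly one of
`j`, `f j` lies strictly between `i` and `f i` clockwise. -/
def ChordsCross {n : ℕ} (f : Fin n → Fin n) (i j : Fin n) : Prop :=
  Xor' (CircBtw i (f i) j) (CircBtw i (f i) (f j))

/-- Vertex `i` is involved in a crossing: its chord crosses some other chord. -/
def CrossVert {n : ℕ} (f : Fin n → Fin n) (i : Fin n) : Prop :=
  ∃ j, j ≠ i ∧ j ≠ f i ∧ ChordsCross f i j

open Classical in
/-- The set of all pairings of `2k` vertices on a circle. -/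
noncomputable def pairings (k : ℕ) : Finset (Fin (2*k) → Fin (2*k)) :=
  Finset.univ.filter IsPairing

open Classical in
/-- The number of vertices involved in at least one crossing. -/
noncomputable def crossCount (k : ℕ) (f : Fin (2*k) → Fin (2*k)) : ℕ :=
  (Finset.univ.filter (fun i => CrossVert f i)).card

open Classical in
/-- `Cr k m`: the number of pairings of `2k` vertices with exactly `m`
vertices involved in a crossing. -/
noncomputable def Cr (k m : ℕ) : ℕ :=
  ((pairings k).filter (fun f => crossCount k f = m)).card


lemma two_k_pos {k : ℕ} (hk : 2 ≤ k) : 0 < 2*k := by omega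

section Machinery
open Nat


open Classical in
/-- Matchings of the subset `S`: fixed-point-free involutions on `S`, identity off `S`. -/
noncomputable def matchOn {n : ℕ} (S : Finset (Fin n)) : Finset (Fin n → Fin n) :=
  univ.filter (fun f => (∀ i ∈ S, f i ∈ S ∧ f (f i) = i ∧ f i ≠ i) ∧ ∀ i ∉ S, f i = i)

lemma mem_matchOn {n : ℕ} {S : Finset (Fin n)} {f : Fin n → Fin n} :
    f ∈ matchOn S ↔ (∀ i ∈ S, f i ∈ S ∧ f (f i) = i ∧ f i ≠ i) ∧ ∀ i ∉ S, f i = i := by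
  simp [matchOn]

open Classical in
lemma fiber_matchOn {n : ℕ} {S : Finset (Fin n)} {a b : Fin n} (ha : a ∈ S) (hbS : b ∈ S)
    (hba : b ≠ a) :
    ((matchOn S).filter (fun f => f a = b)).card = (matchOn ((S.erase a).erase b)).card := by
  set S' := (S.erase a).erase b with hS'
  have hmem : ∀ i : Fin n, i ∈ S' ↔ i ∈ S ∧ i ≠ a ∧ i ≠ b := by
    intro i; simp [hS', Finset.mem_erase]; tauto
  set I : (Fin n → Fin n) → (Fin n → Fin n) :=
    fun f i => if i = a ∨ i = b then i else f i with hI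
  set J : (Fin n → Fin n) → (Fin n → Fin n) :=
    fun g i => if i = a then b else if i = b then a else g i with hJ
  have Ieq : ∀ f i, i ≠ a → i ≠ b → I f i = f i := by
    intro f i h1 h2; simp [hI, h1, h2]
  have Ia : ∀ f, I f a = a := by intro f; simp [hI]
  have Ib : ∀ f, I f b = b := by intro f; simp [hI]
  have Ja : ∀ g, J g a = b := by intro g; simp [hJ]
  have Jb : ∀ g, J g b = a := by intro g; simp [hJ, hba]
  have Jeq : ∀ g i, i ≠ a → i ≠ b → J g i = g i := by
    intro g i h1 h2; simp [hJ, h1, h2]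
  apply Finset.card_nbij' I J
  · intro f hf
    rw [Finset.mem_coe, Finset.mem_filter, mem_matchOn] at hf
    obtain ⟨⟨h1, h2⟩, hfa⟩ := hf
    rw [Finset.mem_coe, mem_matchOn]
    constructor
    · intro i hi
      rw [hmem] at hi
      obtain ⟨hiS, hia, hib⟩ := hi
      obtain ⟨m1, m2, m3⟩ := h1 i hiS
      have hfia : f i ≠ a := by
        intro h; apply hib; rw [← hfa, ← h, m2]
      have hfib : f i ≠ b := by
        intro h
        apply hia
        have : f (f i) = f (f a) := by rw [h, hfa]
        rwa [m2, (h1 a ha).2.1] at this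
      rw [Ieq f i hia hib, Ieq f (f i) hfia hfib]
      exact ⟨(hmem _).2 ⟨m1, hfia, hfib⟩, m2, m3⟩
    · intro i hi
      by_cases hia : i = a
      · rw [hia, Ia]
      · by_cases hib : i = b
        · rw [hib, Ib]
        · rw [Ieq f i hia hib]
          apply h2
          intro hiS
          exact hi ((hmem i).2 ⟨hiS, hia, hib⟩)
  · intro g hg
    rw [Finset.mem_coe, mem_matchOn] at hg
    obtain ⟨h1, h2⟩ := hg
    rw [Finset.mem_coe, Finset.mem_filter, mem_matchOn]
    refine ⟨⟨?_, ?_⟩, Ja g⟩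
    · intro i hiS
      by_cases hia : i = a
      · rw [hia, Ja g, Jb g]
        exact ⟨hbS, rfl, hba⟩
      · by_cases hib : i = b
        · rw [hib, Jb g, Ja g]
          exact ⟨ha, rfl, Ne.symm hba⟩
        · have hiE : i ∈ S' := (hmem i).2 ⟨hiS, hia, hib⟩
          obtain ⟨m1, m2, m3⟩ := h1 i hiE
          obtain ⟨n1, n2, n3⟩ := (hmem _).1 m1
          rw [Jeq g i hia hib, Jeq g (g i) n2 n3]
          exact ⟨n1, m2, m3⟩
    · intro i hiS
      have hia : i ≠ a := fun h => hiS (h ▸ ha)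
      have hib : i ≠ b := fun h => hiS (h ▸ hbS)
      rw [Jeq g i hia hib]
      exact h2 i (fun h => hiS ((hmem i).1 h).1)
  · intro f hf
    rw [Finset.mem_coe, Finset.mem_filter, mem_matchOn] at hf
    obtain ⟨⟨h1, h2⟩, hfa⟩ := hf
    funext i
    by_cases hia : i = a
    · rw [hia, Ja, hfa]
    · by_cases hib : i = b
      · rw [hib, Jb, ← hfa, (h1 a ha).2.1]
      · rw [Jeq _ i hia hib, Ieq f i hia hib]
  · intro g hg
    rw [Finset.mem_coe, mem_matchOn] at hg
    obtain ⟨h1, h2⟩ := hg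
    funext i
    by_cases hia : i = a
    · rw [hia, Ia, (h2 a (by simp [hS']))]
    · by_cases hib : i = b
      · rw [hib, Ib, (h2 b (by simp [hS']))]
      · rw [Ieq _ i hia hib, Jeq g i hia hib]

lemma df_step (c : ℕ) (h1 : 1 ≤ c) :
    (c - 1) * (if Even (c - 2) then (c - 3)‼ else 0) = if Even c then (c - 1)‼ else 0 := by
  by_cases he : Even c
  · obtain ⟨m, hm⟩ := he
    have he2 : Even (c - 2) := ⟨m - 1, by omega⟩
    rw [if_pos he2, if_pos ⟨m, hm⟩]
    rcases eq_or_lt_of_le (show 2 ≤ c by omega) with h2 | h4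
    · rw [← h2]; decide
    · have h3 : c - 1 = (c - 3) + 2 := by omega
      rw [h3, Nat.doubleFactorial_add_two]
  · rw [if_neg he]
    rcases eq_or_lt_of_le h1 with h2 | h3
    · simp [← h2]
    · have : ¬ Even (c - 2) := by
        intro ⟨m, hm⟩
        exact he ⟨m + 1, by omega⟩
      rw [if_neg this, Nat.mul_zero]

lemma card_matchOn {n : ℕ} (S : Finset (Fin n)) :
    (matchOn S).card = if Even S.card then (S.card - 1)‼ else 0 := by
  classical
  induction S using Finset.strongInduction with
  | _ S ih =>
  rcases S.eq_empty_or_nonempty with rfl | hS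
  · have : matchOn (∅ : Finset (Fin n)) = {fun i => i} := by
      ext f
      simp only [mem_matchOn, Finset.mem_singleton, Finset.notMem_empty]
      constructor
      · rintro ⟨-, h⟩; funext i; exact h i (by simp)
      · rintro rfl; simp
    simp [this]
  · obtain ⟨a, ha⟩ := hS
    have key : (matchOn S).card
        = ∑ b ∈ S.erase a, ((matchOn S).filter (fun f => f a = b)).card := by
      apply Finset.card_eq_sum_card_fiberwise
      intro f hf
      rw [Finset.mem_coe, mem_matchOn] at hf
      obtain ⟨hfa, hinv, hne⟩ := hf.1 a ha
      exact Finset.mem_erase.2 ⟨hne, hfa⟩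
    have fib : ∀ b ∈ S.erase a, ((matchOn S).filter (fun f => f a = b)).card
        = if Even (S.card - 2) then (S.card - 3)‼ else 0 := by
      intro b hb
      obtain ⟨hba, hbS⟩ := Finset.mem_erase.1 hb
      have hsub : (S.erase a).erase b ⊂ S :=
        Finset.ssubset_of_subset_of_ssubset (Finset.erase_subset _ _) (Finset.erase_ssubset ha)
      have hc : ((S.erase a).erase b).card = S.card - 2 := by
        rw [Finset.card_erase_of_mem (Finset.mem_erase.2 ⟨hba, hbS⟩),
          Finset.card_erase_of_mem ha, Nat.sub_sub]
      have h31 : S.card - 2 - 1 = S.card - 3 := by rw [Nat.sub_sub]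
      rw [fiber_matchOn ha hbS hba, ih _ hsub, hc, h31]
    rw [key, Finset.sum_congr rfl fib, Finset.sum_const, Finset.card_erase_of_mem ha,
      smul_eq_mul]
    exact df_step _ (Finset.card_pos.2 ⟨a, ha⟩)

lemma noCross_iff {k : ℕ} (hk : 2 ≤ k) (f : Fin (2*k) → Fin (2*k)) (hf : IsPairing f) :
    (¬ CrossVert f (⟨0, two_k_pos hk⟩ : Fin (2*k))) ↔
    ∀ i : Fin (2*k), ((0 < i.val ∧ i.val < (f ⟨0, two_k_pos hk⟩).val) ↔
      (0 < (f i).val ∧ (f i).val < (f ⟨0, two_k_pos hk⟩).val)) := by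
  set z : Fin (2*k) := ⟨0, two_k_pos hk⟩ with hz
  have hzv : z.val = 0 := rfl
  have hsub : ∀ x : Fin (2*k), (x - z).val = x.val := by
    intro x
    rw [Fin.sub_def]
    simp only [hzv, Nat.sub_zero]
    rw [Nat.add_mod_left, Nat.mod_eq_of_lt x.isLt]
  have hC : ∀ b x : Fin (2*k), CircBtw z b x ↔ (0 < x.val ∧ x.val < b.val) := by
    intro b x; unfold CircBtw; rw [hsub, hsub]
  constructor
  · intro h i
    by_contra hx
    apply h
    have hiz : i ≠ z := by
      rintro rfl
      apply hx
      constructor <;> (rintro ⟨h1, h2⟩; omega)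
    have hifz : i ≠ f z := by
      intro hh
      apply hx
      rw [hh, hf.1]
      constructor <;> (rintro ⟨h1, h2⟩; omega)
    refine ⟨i, hiz, hifz, ?_⟩
    unfold ChordsCross
    rw [hC, hC]
    by_cases hA : (0 < i.val ∧ i.val < (f z).val)
    · exact Or.inl ⟨hA, fun hB => hx ⟨fun _ => hB, fun _ => hA⟩⟩
    · by_cases hB : (0 < (f i).val ∧ (f i).val < (f z).val)
      · exact Or.inr ⟨hB, hA⟩
      · exact absurd ⟨fun a => absurd a hA, fun b => absurd b hB⟩ hx
  · intro h hcross
    unfold CrossVert ChordsCross at hcross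
    obtain ⟨i, hi1, hi2, hx⟩ := hcross
    rw [hC, hC] at hx
    have := h i
    rcases hx with ⟨hA, hB⟩ | ⟨hB, hA⟩
    · exact hB (this.1 hA)
    · exact hA (this.2 hB)

open Classical in
lemma card_A {k : ℕ} (hk : 2 ≤ k) (j : Fin (2*k)) (hj : j ≠ (⟨0, two_k_pos hk⟩ : Fin (2*k))) :
    ((pairings k).filter (fun f => ¬ CrossVert f (⟨0, two_k_pos hk⟩ : Fin (2*k)) ∧
        f (⟨0, two_k_pos hk⟩ : Fin (2*k)) = j)).card
      = (matchOn (univ.filter (fun x : Fin (2*k) => 0 < x.val ∧ x.val < j.val))).card *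
        (matchOn (univ.filter (fun x : Fin (2*k) => j.val < x.val))).card := by
  set z : Fin (2*k) := ⟨0, two_k_pos hk⟩ with hz
  have hzv : z.val = 0 := rfl
  have hjv : 0 < j.val := by
    rcases Nat.eq_zero_or_pos j.val with h | h
    · exact absurd (Fin.ext (h.trans hzv.symm)) hj
    · exact h
  set L : Finset (Fin (2*k)) := univ.filter (fun x : Fin (2*k) => 0 < x.val ∧ x.val < j.val)
    with hL
  set R : Finset (Fin (2*k)) := univ.filter (fun x : Fin (2*k) => j.val < x.val) with hR
  have hLmem : ∀ x : Fin (2*k), x ∈ L ↔ (0 < x.val ∧ x.val < j.val) := by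
    intro x; simp [hL]
  have hRmem : ∀ x : Fin (2*k), x ∈ R ↔ j.val < x.val := by
    intro x; simp [hR]
  rw [← Finset.card_product]
  set I : (Fin (2*k) → Fin (2*k)) → ((Fin (2*k) → Fin (2*k)) × (Fin (2*k) → Fin (2*k))) :=
    fun f => (fun i => if 0 < i.val ∧ i.val < j.val then f i else i,
              fun i => if j.val < i.val then f i else i) with hI
  set J : ((Fin (2*k) → Fin (2*k)) × (Fin (2*k) → Fin (2*k))) → (Fin (2*k) → Fin (2*k)) :=
    fun p i => if i = z then j else if i = j then z
      else if 0 < i.val ∧ i.val < j.val then p.1 i else p.2 i with hJ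
  have hI1 : ∀ f i, (0 < i.val ∧ i.val < j.val) → (I f).1 i = f i := by
    intro f i h; simp only [hI, if_pos h]
  have hI1' : ∀ f i, ¬(0 < i.val ∧ i.val < j.val) → (I f).1 i = i := by
    intro f i h; simp only [hI, if_neg h]
  have hI2 : ∀ f i, j.val < i.val → (I f).2 i = f i := by
    intro f i h; simp only [hI, if_pos h]
  have hI2' : ∀ f i, ¬(j.val < i.val) → (I f).2 i = i := by
    intro f i h; simp only [hI, if_neg h]
  have hJz : ∀ p, J p z = j := by intro p; simp only [hJ, if_pos rfl]
  have hJj : ∀ p, J p j = z := by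
    intro p; simp [hJ, hj]
  have hJL : ∀ p i, i ≠ z → i ≠ j → (0 < i.val ∧ i.val < j.val) → J p i = p.1 i := by
    intro p i h1 h2 h3; simp only [hJ, if_neg h1, if_neg h2, if_pos h3]
  have hJR : ∀ p i, i ≠ z → i ≠ j → ¬(0 < i.val ∧ i.val < j.val) → J p i = p.2 i := by
    intro p i h1 h2 h3; simp only [hJ, if_neg h1, if_neg h2, if_neg h3]
  have neq_z : ∀ i : Fin (2*k), 0 < i.val → i ≠ z := by
    intro i h1 h2; rw [h2, hzv] at h1; exact Nat.lt_irrefl 0 h1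
  have neq_j : ∀ i : Fin (2*k), i.val ≠ j.val → i ≠ j := by
    intro i h1 h2; exact h1 (by rw [h2])
  apply Finset.card_nbij' I J
  -- 1. I maps into the product
  · intro f hf
    rw [Finset.mem_coe, Finset.mem_filter] at hf
    obtain ⟨hfp, hnc, hfz⟩ := hf
    have hP : IsPairing f := by simpa [pairings] using hfp
    have hiff := (noCross_iff hk f hP).1 hnc
    rw [show (⟨0, two_k_pos hk⟩ : Fin (2*k)) = z from rfl, hfz] at hiff
    have hfj : f j = z := by rw [← hfz, hP.1]
    have hfL : ∀ i : Fin (2*k), (0 < i.val ∧ i.val < j.val) →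
        (0 < (f i).val ∧ (f i).val < j.val) := fun i h => (hiff i).1 h
    have hfR : ∀ i : Fin (2*k), j.val < i.val → j.val < (f i).val := by
      intro i h
      have hiz : i ≠ z := neq_z i (by omega)
      have hij : i ≠ j := neq_j i (by omega)
      have h1 : f i ≠ z := by
        intro hh
        have : f (f i) = f z := by rw [hh]
        rw [hP.1, hfz] at this
        exact hij this
      have h2 : f i ≠ j := by
        intro hh
        have : f (f i) = f j := by rw [hh]
        rw [hP.1, hfj] at this
        exact hiz this
      have h3 : ¬(0 < (f i).val ∧ (f i).val < j.val) := by
        intro hh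
        have := (hiff i).2 hh
        omega
      have h4 : (f i).val ≠ 0 := fun hh => h1 (Fin.ext (hh.trans hzv.symm))
      have h5 : (f i).val ≠ j.val := fun hh => h2 (Fin.ext hh)
      omega
    rw [Finset.mem_coe, Finset.mem_product]
    constructor
    · rw [mem_matchOn]
      constructor
      · intro i hi
        rw [hLmem] at hi
        have hfi := hfL i hi
        rw [hI1 f i hi, hI1 f (f i) hfi]
        exact ⟨(hLmem _).2 hfi, hP.1 i, hP.2 i⟩
      · intro i hi
        rw [hLmem] at hi
        exact hI1' f i hi
    · rw [mem_matchOn]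
      constructor
      · intro i hi
        rw [hRmem] at hi
        have hfi := hfR i hi
        rw [hI2 f i hi, hI2 f (f i) hfi]
        exact ⟨(hRmem _).2 hfi, hP.1 i, hP.2 i⟩
      · intro i hi
        rw [hRmem] at hi
        exact hI2' f i hi
  -- 2. J maps into the filtered pairings
  · intro p hp
    rw [Finset.mem_coe, Finset.mem_product, mem_matchOn, mem_matchOn] at hp
    obtain ⟨⟨g1, g2⟩, h1, h2⟩ := hp
    have gL : ∀ i : Fin (2*k), (0 < i.val ∧ i.val < j.val) →
        (0 < (p.1 i).val ∧ (p.1 i).val < j.val) ∧ p.1 (p.1 i) = i ∧ p.1 i ≠ i := by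
      intro i h
      obtain ⟨m1, m2, m3⟩ := g1 i ((hLmem i).2 h)
      exact ⟨(hLmem _).1 m1, m2, m3⟩
    have gId : ∀ i : Fin (2*k), ¬(0 < i.val ∧ i.val < j.val) → p.1 i = i := by
      intro i h; exact g2 i (fun hh => h ((hLmem i).1 hh))
    have hRf : ∀ i : Fin (2*k), j.val < i.val →
        (j.val < (p.2 i).val) ∧ p.2 (p.2 i) = i ∧ p.2 i ≠ i := by
      intro i h
      obtain ⟨m1, m2, m3⟩ := h1 i ((hRmem i).2 h)
      exact ⟨(hRmem _).1 m1, m2, m3⟩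
    have hId : ∀ i : Fin (2*k), ¬(j.val < i.val) → p.2 i = i := by
      intro i h; exact h2 i (fun hh => h ((hRmem i).1 hh))
    -- key pointwise description of J p
    have main : ∀ i : Fin (2*k), (J p (J p i) = i ∧ J p i ≠ i) ∧
        ((0 < i.val ∧ i.val < j.val) ↔ (0 < (J p i).val ∧ (J p i).val < j.val)) := by
      intro i
      by_cases hiz : i = z
      · rw [hiz, hJz, hJj]
        refine ⟨⟨rfl, hj⟩, ?_⟩
        constructor <;> (rintro ⟨u1, u2⟩; omega)
      · by_cases hij : i = j
        · rw [hij, hJj, hJz]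
          refine ⟨⟨rfl, Ne.symm hj⟩, ?_⟩
          constructor <;> (rintro ⟨u1, u2⟩; omega)
        · have hvz : i.val ≠ 0 := fun hh => hiz (Fin.ext (hh.trans hzv.symm))
          have hvj : i.val ≠ j.val := fun hh => hij (Fin.ext hh)
          by_cases hiL : (0 < i.val ∧ i.val < j.val)
          · obtain ⟨m1, m2, m3⟩ := gL i hiL
            rw [hJL p i hiz hij hiL,
              hJL p (p.1 i) (neq_z _ m1.1) (neq_j _ (by omega)) m1, m2]
            exact ⟨⟨rfl, m3⟩, fun _ => m1, fun _ => hiL⟩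
          · have hiR : j.val < i.val := by omega
            obtain ⟨m1, m2, m3⟩ := hRf i hiR
            have hm1 : ¬(0 < (p.2 i).val ∧ (p.2 i).val < j.val) := by omega
            rw [hJR p i hiz hij hiL,
              hJR p (p.2 i) (neq_z _ (by omega)) (neq_j _ (by omega)) hm1, m2]
            refine ⟨⟨rfl, m3⟩, ?_⟩
            constructor <;> (rintro ⟨u1, u2⟩; omega)
    have hPJ : IsPairing (J p) := ⟨fun i => (main i).1.1, fun i => (main i).1.2⟩
    rw [Finset.mem_coe, Finset.mem_filter]
    refine ⟨by simpa [pairings] using hPJ, ?_, hJz p⟩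
    rw [noCross_iff hk _ hPJ]
    intro i
    rw [show (J p (⟨0, two_k_pos hk⟩ : Fin (2*k))) = j from hJz p]
    exact (main i).2
  -- 3. J ∘ I = id on the filter
  · intro f hf
    rw [Finset.mem_coe, Finset.mem_filter] at hf
    obtain ⟨hfp, hnc, hfz⟩ := hf
    have hP : IsPairing f := by simpa [pairings] using hfp
    have hiff := (noCross_iff hk f hP).1 hnc
    rw [show (⟨0, two_k_pos hk⟩ : Fin (2*k)) = z from rfl, hfz] at hiff
    have hfj : f j = z := by rw [← hfz, hP.1]
    funext i
    by_cases hiz : i = z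
    · rw [hiz, hJz, hfz]
    · by_cases hij : i = j
      · rw [hij, hJj, hfj]
      · have hvz : i.val ≠ 0 := fun hh => hiz (Fin.ext (hh.trans hzv.symm))
        have hvj : i.val ≠ j.val := fun hh => hij (Fin.ext hh)
        by_cases hiL : (0 < i.val ∧ i.val < j.val)
        · rw [hJL _ i hiz hij hiL, hI1 f i hiL]
        · have hiR : j.val < i.val := by omega
          rw [hJR _ i hiz hij hiL, hI2 f i hiR]
  -- 4. I ∘ J = id on the product
  · intro p hp
    rw [Finset.mem_coe, Finset.mem_product, mem_matchOn, mem_matchOn] at hp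
    obtain ⟨⟨g1, g2⟩, h1, h2⟩ := hp
    have gId : ∀ i : Fin (2*k), ¬(0 < i.val ∧ i.val < j.val) → p.1 i = i := by
      intro i h; exact g2 i (fun hh => h ((hLmem i).1 hh))
    have hId : ∀ i : Fin (2*k), ¬(j.val < i.val) → p.2 i = i := by
      intro i h; exact h2 i (fun hh => h ((hRmem i).1 hh))
    have e1 : (I (J p)).1 = p.1 := by
      funext i
      by_cases hiL : (0 < i.val ∧ i.val < j.val)
      · rw [hI1 _ i hiL, hJL p i (neq_z _ hiL.1) (neq_j _ (by omega)) hiL]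
      · rw [hI1' _ i hiL, gId i hiL]
    have e2 : (I (J p)).2 = p.2 := by
      funext i
      by_cases hiR : j.val < i.val
      · rw [hI2 _ i hiR, hJR p i (neq_z _ (by omega)) (neq_j _ (by omega)) (by omega)]
      · rw [hI2' _ i hiR, hId i hiR]
    exact Prod.ext e1 e2

open Classical in
lemma count_noCross {k : ℕ} (hk : 2 ≤ k) :
    ((pairings k).filter (fun f => ¬ CrossVert f (⟨0, two_k_pos hk⟩ : Fin (2*k)))).card
      = ∑ a ∈ Finset.range k, (2*a - 1)‼ * (2*(k-1-a) - 1)‼ := by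
  set z : Fin (2*k) := ⟨0, two_k_pos hk⟩ with hz
  have hzv : z.val = 0 := rfl
  set G : ℕ → ℕ := fun t => (if Even (t - 1) then (t - 1 - 1)‼ else 0) *
      (if Even (2*k - 1 - t) then (2*k - 1 - t - 1)‼ else 0) with hG
  have step1 : ((pairings k).filter (fun f => ¬ CrossVert f z)).card
      = ∑ j ∈ univ.erase z, G j.val := by
    rw [Finset.card_eq_sum_card_fiberwise
      (f := fun f => f z) (t := univ.erase z) ?_]
    · apply Finset.sum_congr rfl
      intro j hj
      have hjz : j ≠ z := (Finset.mem_erase.1 hj).1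
      rw [Finset.filter_filter]
      have hA := card_A hk j hjz
      have hLcard : (univ.filter (fun x : Fin (2*k) => 0 < x.val ∧ x.val < j.val)).card
          = j.val - 1 := by
        have : univ.filter (fun x : Fin (2*k) => 0 < x.val ∧ x.val < j.val)
            = Finset.Ioo z j := by
          ext x
          simp only [Finset.mem_filter, Finset.mem_univ, true_and, Finset.mem_Ioo,
            Fin.lt_def, hzv]
        rw [this, Fin.card_Ioo, hzv, Nat.sub_zero]
      have hRcard : (univ.filter (fun x : Fin (2*k) => j.val < x.val)).card
          = 2*k - 1 - j.val := by
        have : univ.filter (fun x : Fin (2*k) => j.val < x.val) = Finset.Ioi j := by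
          ext x
          simp only [Finset.mem_filter, Finset.mem_univ, true_and, Finset.mem_Ioi,
            Fin.lt_def]
        rw [this, Fin.card_Ioi]
      rw [hG]
      rw [card_matchOn, card_matchOn, hLcard, hRcard] at hA
      exact hA
    · intro f hf
      rw [Finset.mem_coe, Finset.mem_filter] at hf
      have hP : IsPairing f := by
        have := hf.1; simpa [pairings] using this
      exact Finset.mem_erase.2 ⟨hP.2 z, Finset.mem_univ _⟩
  rw [step1]
  have step2 : ∑ j ∈ univ.erase z, G j.val = ∑ t ∈ Finset.Ioo 0 (2*k), G t := by
    apply Finset.sum_nbij' (i := fun j : Fin (2*k) => j.val)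
      (j := fun t => (⟨t % (2*k), Nat.mod_lt _ (by omega)⟩ : Fin (2*k)))
    · intro a ha
      rw [Finset.mem_erase] at ha
      have h0 : a.val ≠ 0 := fun hh => ha.1 (Fin.ext (hh.trans hzv.symm))
      have := a.isLt
      exact Finset.mem_Ioo.2 ⟨by omega, this⟩
    · intro t ht
      rw [Finset.mem_Ioo] at ht
      refine Finset.mem_erase.2 ⟨?_, Finset.mem_univ _⟩
      intro hh
      have : t % (2*k) = 0 := congrArg Fin.val hh
      rw [Nat.mod_eq_of_lt ht.2] at this
      omega
    · intro a ha
      exact Fin.ext (Nat.mod_eq_of_lt a.isLt)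
    · intro t ht
      rw [Finset.mem_Ioo] at ht
      exact Nat.mod_eq_of_lt ht.2
    · intro a ha; rfl
  rw [step2]
  have step3 : ∑ t ∈ Finset.Ioo 0 (2*k), G t
      = ∑ t ∈ (Finset.Ioo 0 (2*k)).filter (fun t => Odd t), G t := by
    symm
    apply Finset.sum_filter_of_ne
    intro t ht hGt
    rw [Finset.mem_Ioo] at ht
    rw [Nat.odd_iff]
    by_contra hodd
    apply hGt
    have : ¬ Even (t - 1) := by
      rintro ⟨m, hm⟩
      omega
    simp only [hG]
    simp only [if_neg this, Nat.zero_mul]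
  rw [step3]
  symm
  apply Finset.sum_nbij' (i := fun a : ℕ => 2*a + 1) (j := fun t => t / 2)
  · intro a ha
    rw [Finset.mem_range] at ha
    refine Finset.mem_filter.2 ⟨Finset.mem_Ioo.2 ⟨by omega, by omega⟩, ⟨a, by omega⟩⟩
  · intro t ht
    rw [Finset.mem_filter, Finset.mem_Ioo] at ht
    obtain ⟨⟨h1, h2⟩, h3⟩ := ht
    rw [Nat.odd_iff] at h3
    rw [Finset.mem_range]
    omega
  · intro a ha; omega
  · intro t ht
    rw [Finset.mem_filter, Finset.mem_Ioo] at ht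
    obtain ⟨⟨h1, h2⟩, h3⟩ := ht
    rw [Nat.odd_iff] at h3
    omega
  · intro a ha
    rw [Finset.mem_range] at ha
    simp only [hG]
    have e0 : 2*a + 1 - 1 = 2*a := by omega
    have e1 : 2*a + 1 - 1 - 1 = 2*a - 1 := by omega
    have e2 : 2*k - 1 - (2*a+1) - 1 = 2*(k-1-a) - 1 := by omega
    have e3 : 2*k - 1 - (2*a+1) = 2*(k-1-a) := by omega
    rw [e0, e2, e3]
    have p1 : Even (2*a) := ⟨a, by omega⟩
    have p2 : Even (2*(k-1-a)) := ⟨k-1-a, by omega⟩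
    simp [p1, p2]

lemma card_pairings {k : ℕ} (hk : 1 ≤ k) : (pairings k).card = (2*k - 1)‼ := by
  classical
  have : pairings k = matchOn (univ : Finset (Fin (2*k))) := by
    ext f
    rw [mem_matchOn]
    simp only [pairings, Finset.mem_filter, Finset.mem_univ, true_and]
    unfold IsPairing
    constructor
    · rintro ⟨h1, h2⟩
      exact ⟨fun i _ => ⟨h1 i, h2 i⟩, fun i hi => absurd trivial hi⟩
    · rintro ⟨h1, h2⟩
      exact ⟨fun i => (h1 i trivial).1, fun i => (h1 i trivial).2⟩
  rw [this, card_matchOn, Finset.card_univ, Fintype.card_fin,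
    if_pos ⟨k, by omega⟩]

lemma fact_eq (m : ℕ) : (2*m)! = 2^m * m ! * (2*m - 1)‼ := by
  cases m with
  | zero => decide
  | succ m =>
    have h1 : 2*(m+1) = (2*m+1)+1 := by omega
    rw [h1, Nat.factorial_eq_mul_doubleFactorial,
      show (2*m+1)+1 = 2*(m+1) from by omega, Nat.doubleFactorial_two_mul,
      show 2*(m+1) - 1 = 2*m+1 from by omega]

lemma key_q (a b : ℕ) :
    ((2*a - 1)‼ : ℚ) * ((2*b - 1)‼ : ℚ) * (((2*(a+b)).choose (2*a) : ℕ) : ℚ)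
      = ((2*(a+b) - 1)‼ : ℚ) * (((a+b).choose a : ℕ) : ℚ) := by
  have qa : ((2*a)! : ℚ) = 2^a * (a ! : ℚ) * ((2*a - 1)‼ : ℚ) := by
    exact_mod_cast congrArg (Nat.cast : ℕ → ℚ) (fact_eq a)
  have qb : ((2*b)! : ℚ) = 2^b * (b ! : ℚ) * ((2*b - 1)‼ : ℚ) := by
    exact_mod_cast congrArg (Nat.cast : ℕ → ℚ) (fact_eq b)
  have qn : ((2*(a+b))! : ℚ) = 2^(a+b) * ((a+b)! : ℚ) * ((2*(a+b) - 1)‼ : ℚ) := by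
    exact_mod_cast congrArg (Nat.cast : ℕ → ℚ) (fact_eq (a+b))
  have c1 : (((2*(a+b)).choose (2*a) : ℕ) : ℚ)
      = ((2*(a+b))! : ℚ) / (((2*a)! : ℚ) * ((2*b)! : ℚ)) := by
    rw [Nat.cast_choose ℚ (by omega : 2*a ≤ 2*(a+b)),
      show 2*(a+b) - 2*a = 2*b from by omega]
  have c2 : (((a+b).choose a : ℕ) : ℚ) = ((a+b)! : ℚ) / ((a ! : ℚ) * (b ! : ℚ)) := by
    rw [Nat.cast_choose ℚ (by omega : a ≤ a+b), show a+b-a = b from by omega]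
  have h1 : (a ! : ℚ) ≠ 0 := Nat.cast_ne_zero.2 (Nat.factorial_ne_zero _)
  have h2 : (b ! : ℚ) ≠ 0 := Nat.cast_ne_zero.2 (Nat.factorial_ne_zero _)
  have h3 : ((2*a)! : ℚ) ≠ 0 := Nat.cast_ne_zero.2 (Nat.factorial_ne_zero _)
  have h4 : ((2*b)! : ℚ) ≠ 0 := Nat.cast_ne_zero.2 (Nat.factorial_ne_zero _)
  rw [c1, c2, qn]
  field_simp
  rw [qa, qb]
  ring

lemma term_q (c i : ℕ) (hi : i ≤ c) :
    (((c+1).choose (i+1) : ℕ) : ℚ) / (((2*c+2).choose (2*i+2) : ℕ) : ℚ)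
      = ((c.choose i : ℕ) : ℚ) / (((2*c+1).choose (2*i+1) : ℕ) : ℚ) := by
  have hY1 : (((2*c+1).choose (2*i+1) : ℕ) : ℚ) ≠ 0 :=
    Nat.cast_ne_zero.2 (Nat.choose_pos (by omega)).ne'
  have hY2 : (((2*c+2).choose (2*i+2) : ℕ) : ℚ) ≠ 0 :=
    Nat.cast_ne_zero.2 (Nat.choose_pos (by omega)).ne'
  have N1 := Nat.add_one_mul_choose_eq c i
  have N2 := Nat.add_one_mul_choose_eq (2*c+1) (2*i+1)
  have N1q : ((c:ℚ)+1) * (c.choose i : ℕ) = ((c+1).choose (i+1) : ℕ) * ((i:ℚ)+1) := by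
    exact_mod_cast N1
  have N2q : (2*(c:ℚ)+2) * ((2*c+1).choose (2*i+1) : ℕ)
      = ((2*c+2).choose (2*i+2) : ℕ) * (2*(i:ℚ)+2) := by
    rw [show (2*c+1)+1 = 2*c+2 from rfl, show (2*i+1)+1 = 2*i+2 from rfl] at N2
    exact_mod_cast N2
  rw [div_eq_div_iff hY2 hY1]
  have hi1 : ((i:ℚ)+1) ≠ 0 := by positivity
  apply mul_left_cancel₀ hi1
  linear_combination (-(((2*c+1).choose (2*i+1) : ℕ) : ℚ)) * N1q
    + ((c.choose i : ℕ) : ℚ)/2 * N2q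

lemma sum_shiftk (k : ℕ) (hk : 2 ≤ k) :
    ∑ a ∈ Finset.range k, (((k-1).choose a : ℕ) : ℚ) / (((2*k-2).choose (2*a) : ℕ) : ℚ)
      = 2 + ∑ m ∈ Finset.Icc 2 (k-1),
          (((k-2).choose (m-2) : ℕ) : ℚ) / (((2*k-3).choose (2*m-3) : ℕ) : ℚ) := by
  obtain ⟨c, rfl⟩ : ∃ c, k = c + 2 := ⟨k - 2, by omega⟩
  have e1 : c + 2 - 1 = c + 1 := by omega
  have e2 : 2*(c+2) - 2 = 2*c + 2 := by omega
  have e3 : c + 2 - 2 = c := by omega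
  have e4 : 2*(c+2) - 3 = 2*c + 1 := by omega
  rw [e1, e2, e3, e4, Finset.sum_range_succ, Finset.sum_range_succ']
  have hlast : (((c+1).choose (c+1) : ℕ) : ℚ) / (((2*c+2).choose (2*(c+1)) : ℕ) : ℚ) = 1 := by
    rw [show 2*(c+1) = 2*c+2 from by omega, Nat.choose_self, Nat.choose_self]
    norm_num
  have hzero : (((c+1).choose 0 : ℕ) : ℚ) / (((2*c+2).choose (2*0) : ℕ) : ℚ) = 1 := by
    rw [show 2*0 = 0 from rfl, Nat.choose_zero_right, Nat.choose_zero_right]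
    norm_num
  rw [hlast, hzero]
  have hmain : ∑ i ∈ Finset.range c,
      (((c+1).choose (i+1) : ℕ) : ℚ) / (((2*c+2).choose (2*(i+1)) : ℕ) : ℚ)
      = ∑ m ∈ Finset.Icc 2 (c+1),
          ((c.choose (m-2) : ℕ) : ℚ) / (((2*c+1).choose (2*m-3) : ℕ) : ℚ) := by
    apply Finset.sum_nbij' (i := fun i => i + 2) (j := fun m => m - 2)
    · intro i hi
      rw [Finset.mem_range] at hi
      rw [Finset.mem_Icc]
      omega
    · intro m hm
      rw [Finset.mem_Icc] at hm
      rw [Finset.mem_range]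
      omega
    · intro i hi; omega
    · intro m hm
      rw [Finset.mem_Icc] at hm
      omega
    · intro i hi
      rw [Finset.mem_range] at hi
      rw [show i + 2 - 2 = i from by omega, show 2*(i+2) - 3 = 2*i+1 from by omega,
        show 2*(i+1) = 2*i+2 from by omega]
      exact term_q c i (by omega)
  rw [hmain]
  ring

end Machinery

open Classical in
/-- In a uniformly random pairing of `2k` vertices on a circle (`k ≥ 2`), the
probability that a fixed vertex (vertex `1`) is involved in a crossing equals
`(2k-3)/(2k-1) - (1/(2k-1)) ∑_{m=2}^{k-1} C(k-2, m-2)/C(2k-3, 2m-3)`. -/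
theorem prob_vertex_crossing (k : ℕ) (hk : 2 ≤ k) :
    (((pairings k).filter
        (fun f => CrossVert f (⟨0, by omega⟩ : Fin (2*k)))).card : ℚ)
      / ((pairings k).card : ℚ)
    = ((2*k : ℚ) - 3) / ((2*k : ℚ) - 1)
      - (1 / ((2*k : ℚ) - 1)) * ∑ m ∈ Finset.Icc 2 (k - 1),
          (Nat.choose (k - 2) (m - 2) : ℚ) / (Nat.choose (2*k - 3) (2*m - 3) : ℚ) := by
  classical
  have hz : (0:ℕ) < 2*k := by omega
  set z : Fin (2*k) := ⟨0, hz⟩ with hzdef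
  show (((pairings k).filter (fun f => CrossVert f z)).card : ℚ) / ((pairings k).card : ℚ)
    = ((2*k : ℚ) - 3) / ((2*k : ℚ) - 1)
      - (1 / ((2*k : ℚ) - 1)) * ∑ m ∈ Finset.Icc 2 (k - 1),
          (Nat.choose (k - 2) (m - 2) : ℚ) / (Nat.choose (2*k - 3) (2*m - 3) : ℚ)
  have hP : (pairings k).card = (Nat.doubleFactorial (2*k - 1)) := card_pairings (by omega)
  have hN : ((pairings k).filter (fun f => ¬ CrossVert f z)).card
      = ∑ a ∈ Finset.range k, (Nat.doubleFactorial (2*a - 1)) * (Nat.doubleFactorial (2*(k-1-a) - 1)) := count_noCross hk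
  have hsplit : ((pairings k).filter (fun f => CrossVert f z)).card
      + ((pairings k).filter (fun f => ¬ CrossVert f z)).card = (pairings k).card :=
    Finset.card_filter_add_card_filter_not (fun f => CrossVert f z)
  have hle : (∑ a ∈ Finset.range k, (Nat.doubleFactorial (2*a - 1)) * (Nat.doubleFactorial (2*(k-1-a) - 1))) ≤ (Nat.doubleFactorial (2*k - 1)) := by
    rw [← hP, ← hN]
    exact Finset.card_le_card (Finset.filter_subset _ _)
  have hnum : ((pairings k).filter (fun f => CrossVert f z)).card
      = (Nat.doubleFactorial (2*k - 1)) - ∑ a ∈ Finset.range k, (Nat.doubleFactorial (2*a - 1)) * (Nat.doubleFactorial (2*(k-1-a) - 1)) := by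
    omega
  rw [hnum, hP, Nat.cast_sub hle]
  have hNq : ((∑ a ∈ Finset.range k, (Nat.doubleFactorial (2*a - 1)) * (Nat.doubleFactorial (2*(k-1-a) - 1)) : ℕ) : ℚ)
      = ((Nat.doubleFactorial (2*k - 3)) : ℚ) * (2 + ∑ m ∈ Finset.Icc 2 (k - 1),
          (Nat.choose (k - 2) (m - 2) : ℚ) / (Nat.choose (2*k - 3) (2*m - 3) : ℚ)) := by
    rw [← sum_shiftk k hk, Nat.cast_sum, Finset.mul_sum]
    apply Finset.sum_congr rfl
    intro a ha
    rw [Finset.mem_range] at ha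
    have hb : a + (k-1-a) = k-1 := by omega
    have hkq := key_q a (k-1-a)
    rw [hb, show 2*(k-1) = 2*k-2 from by omega,
      show 2*k-2-1 = 2*k-3 from by omega] at hkq
    have hCne : (((2*k-2).choose (2*a) : ℕ) : ℚ) ≠ 0 :=
      Nat.cast_ne_zero.2 (Nat.choose_pos (by omega)).ne'
    rw [← mul_div_assoc, eq_div_iff hCne]
    push_cast
    push_cast at hkq
    linear_combination hkq
  rw [hNq]
  have hD0 : (Nat.doubleFactorial (2*k - 1)) = (2*k - 1) * (Nat.doubleFactorial (2*k - 3)) := by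
    rw [show 2*k - 1 = (2*k - 3)+2 from by omega, Nat.doubleFactorial_add_two]
  have hD1 : ((Nat.doubleFactorial (2*k - 1)) : ℚ) = (2*(k:ℚ) - 1) * ((Nat.doubleFactorial (2*k - 3)) : ℚ) := by
    rw [hD0, Nat.cast_mul, Nat.cast_sub (by omega : 1 ≤ 2*k)]
    push_cast
    ring
  rw [hD1]
  have hDne : ((Nat.doubleFactorial (2*k - 3)) : ℚ) ≠ 0 := Nat.cast_ne_zero.2 (Nat.doubleFactorial_pos _).ne'
  have hkQ : (2:ℚ) ≤ (k:ℚ) := by exact_mod_cast hk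
  have hkne : (2*(k:ℚ) - 1) ≠ 0 := by nlinarith
  have hgoal2 : ((2*k:ℚ) - 1) = 2*(k:ℚ) - 1 := by push_cast; ring
  rw [hgoal2]
  field_simp
  ring
end

section
/- The expected number of vertices involved in a crossing, among all uniformly random perfect matchings of 2k vertices on a circle, equals 2k*(2k-3)/(2k-1) - (2k/(2k-1)) * sum_{m=2}^{k-1} binomial(k-2, m-2)/binomial(2k-3, 2m-3), and this expression equals 2k - 2 - 2/k + O(1/k^2) as k tends to infinity. -/
open Finset

/-- The expected number of vertices involved in a crossing, over a uniformly
random pairing of `2k` vertices on a circle. -/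
noncomputable def expCross (k : ℕ) : ℚ :=
  (∑ f ∈ pairings k, (crossCount k f : ℚ)) / ((pairings k).card : ℚ)

open Finset Nat

namespace ECAux

variable {α : Type*} [Fintype α] [DecidableEq α]

/-- fixed-point-free involutions of `s`, extended by the identity. -/
def pOn (s : Finset α) : Finset (α → α) :=
  univ.filter fun f => (∀ i, f (f i) = i) ∧
    ∀ i, (i ∈ s → f i ≠ i ∧ f i ∈ s) ∧ (i ∉ s → f i = i)

lemma mem_pOn {s : Finset α} {f : α → α} :
    f ∈ pOn s ↔ (∀ i, f (f i) = i) ∧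
      ∀ i, (i ∈ s → f i ≠ i ∧ f i ∈ s) ∧ (i ∉ s → f i = i) := by
  simp [pOn]

lemma pOn_empty : pOn (∅ : Finset α) = {id} := by
  ext f
  simp only [mem_pOn, Finset.mem_singleton]
  constructor
  · rintro ⟨-, h2⟩
    funext x
    exact (h2 x).2 (by simp)
  · rintro rfl
    simp

/-- key step: swapping a matched pair out of a pairing -/
lemma swap_mem_pOn_erase {s : Finset α} {a b : α} (ha : a ∈ s) (hbs : b ∈ s) (hba : b ≠ a)
    {f : α → α} (hf : f ∈ pOn s) (hfa : f a = b) :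
    (Equiv.swap a b) ∘ f ∈ pOn ((s.erase a).erase b) := by
  rw [mem_pOn] at hf
  obtain ⟨hinv, hmem⟩ := hf
  have hfb : f b = a := by rw [← hfa, hinv]
  have key : ∀ x, x ≠ a → x ≠ b → f x ≠ a ∧ f x ≠ b := by
    intro x hxa hxb
    constructor
    · intro h; apply hxb; rw [← hinv x, h, hfa]
    · intro h; apply hxa; rw [← hinv x, h, hfb]
  rw [mem_pOn]
  constructor
  · intro x
    by_cases hxa : x = a
    · subst hxa; simp [hfa, hfb, Equiv.swap_apply_left, Equiv.swap_apply_right]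
    by_cases hxb : x = b
    · subst hxb; simp [hfa, hfb, Equiv.swap_apply_left, Equiv.swap_apply_right]
    obtain ⟨h1, h2⟩ := key x hxa hxb
    rw [Function.comp_apply, Function.comp_apply, Equiv.swap_apply_of_ne_of_ne h1 h2,
      hinv, Equiv.swap_apply_of_ne_of_ne hxa hxb]
  · intro x
    constructor
    · intro hx
      obtain ⟨hxb, hx'⟩ := Finset.mem_erase.mp hx
      obtain ⟨hxa, hxs⟩ := Finset.mem_erase.mp hx'
      obtain ⟨h1, h2⟩ := key x hxa hxb
      rw [Function.comp_apply, Equiv.swap_apply_of_ne_of_ne h1 h2]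
      refine ⟨(hmem x).1 hxs |>.1, ?_⟩
      exact Finset.mem_erase.mpr ⟨h2, Finset.mem_erase.mpr ⟨h1, (hmem x).1 hxs |>.2⟩⟩
    · intro hx
      by_cases hxa : x = a
      · subst hxa; simp [hfa, Equiv.swap_apply_right]
      by_cases hxb : x = b
      · subst hxb; simp [hfb, Equiv.swap_apply_left]
      have hxs : x ∉ s := by
        intro hxs
        exact hx (Finset.mem_erase.mpr ⟨hxb, Finset.mem_erase.mpr ⟨hxa, hxs⟩⟩)
      rw [Function.comp_apply, (hmem x).2 hxs, Equiv.swap_apply_of_ne_of_ne hxa hxb]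

lemma swap_mem_pOn_of_erase {s : Finset α} {a b : α} (ha : a ∈ s) (hbs : b ∈ s) (hba : b ≠ a)
    {g : α → α} (hg : g ∈ pOn ((s.erase a).erase b)) :
    (Equiv.swap a b) ∘ g ∈ pOn s ∧ ((Equiv.swap a b) ∘ g) a = b := by
  rw [mem_pOn] at hg
  obtain ⟨hinv, hmem⟩ := hg
  have hganotin : a ∉ (s.erase a).erase b := by simp
  have hgbnotin : b ∉ (s.erase a).erase b := by simp
  have hga : g a = a := (hmem a).2 hganotin
  have hgb : g b = b := (hmem b).2 hgbnotin
  have key : ∀ x, x ≠ a → x ≠ b → g x ≠ a ∧ g x ≠ b := by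
    intro x hxa hxb
    constructor
    · intro h; apply hxa; rw [← hinv x, h, hga]
    · intro h; apply hxb; rw [← hinv x, h, hgb]
  have hfa : ((Equiv.swap a b) ∘ g) a = b := by simp [hga, Equiv.swap_apply_left]
  refine ⟨?_, hfa⟩
  rw [mem_pOn]
  constructor
  · intro x
    by_cases hxa : x = a
    · subst hxa; simp [hga, hgb, Equiv.swap_apply_left, Equiv.swap_apply_right]
    by_cases hxb : x = b
    · subst hxb; simp [hga, hgb, Equiv.swap_apply_left, Equiv.swap_apply_right]
    obtain ⟨h1, h2⟩ := key x hxa hxb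
    rw [Function.comp_apply, Function.comp_apply, Equiv.swap_apply_of_ne_of_ne h1 h2,
      hinv, Equiv.swap_apply_of_ne_of_ne hxa hxb]
  · intro x
    constructor
    · intro hxs
      by_cases hxa : x = a
      · subst hxa
        simp only [Function.comp_apply, hga, Equiv.swap_apply_left]
        exact ⟨by simpa using hba, hbs⟩
      by_cases hxb : x = b
      · subst hxb
        simp only [Function.comp_apply, hgb, Equiv.swap_apply_right]
        exact ⟨by simpa using Ne.symm hba, ha⟩
      have hxin : x ∈ (s.erase a).erase b := Finset.mem_erase.mpr ⟨hxb, Finset.mem_erase.mpr ⟨hxa, hxs⟩⟩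
      obtain ⟨hgne, hgin⟩ := (hmem x).1 hxin
      have hg1 : g x ≠ a := (Finset.mem_erase.mp (Finset.mem_erase.mp hgin).2).1
      have hg2 : g x ≠ b := (Finset.mem_erase.mp hgin).1
      rw [Function.comp_apply, Equiv.swap_apply_of_ne_of_ne hg1 hg2]
      exact ⟨hgne, Finset.mem_of_mem_erase (Finset.mem_of_mem_erase hgin)⟩
    · intro hxs
      have hxa : x ≠ a := fun h => hxs (h ▸ ha)
      have hxb : x ≠ b := fun h => hxs (h ▸ hbs)
      have hxnotin : x ∉ (s.erase a).erase b := fun h =>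
        hxs (Finset.mem_of_mem_erase (Finset.mem_of_mem_erase h))
      rw [Function.comp_apply, (hmem x).2 hxnotin, Equiv.swap_apply_of_ne_of_ne hxa hxb]

lemma card_pOn : ∀ (n : ℕ) (s : Finset α), s.card = n →
    (pOn s).card = if Even n then (n - 1)‼ else 0 := by
  intro n
  induction n using Nat.strong_induction_on with
  | _ n IH =>
    intro s hcard
    rcases Nat.eq_zero_or_pos n with rfl | hn
    · rw [Finset.card_eq_zero] at hcard
      subst hcard
      simp [pOn_empty]
    · obtain ⟨a, ha⟩ := Finset.card_pos.mp (hcard ▸ hn)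
      have hfib : (pOn s).card
          = ∑ b ∈ s.erase a, ((pOn s).filter fun f => f a = b).card := by
        apply Finset.card_eq_sum_card_fiberwise
        intro f hf
        rw [Finset.mem_coe, mem_pOn] at hf
        exact Finset.mem_erase.mpr ⟨(hf.2 a).1 ha |>.1, (hf.2 a).1 ha |>.2⟩
      have hfiber : ∀ b ∈ s.erase a,
          ((pOn s).filter fun f => f a = b).card = (pOn ((s.erase a).erase b)).card := by
        intro b hb
        obtain ⟨hba, hbs⟩ := Finset.mem_erase.mp hb
        apply Finset.card_bij' (fun f _ => (Equiv.swap a b) ∘ f)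
          (fun g _ => (Equiv.swap a b) ∘ g)
        · intro f hf
          rw [Finset.mem_filter] at hf
          exact swap_mem_pOn_erase ha hbs hba hf.1 hf.2
        · intro g hg
          obtain ⟨h1, h2⟩ := swap_mem_pOn_of_erase ha hbs hba hg
          exact Finset.mem_filter.mpr ⟨h1, h2⟩
        · intro f _
          funext x
          simp [Function.comp_apply, Equiv.swap_apply_self]
        · intro g _
          funext x
          simp [Function.comp_apply, Equiv.swap_apply_self]
      rw [hfib, Finset.sum_congr rfl hfiber]
      have hcard' : ∀ b ∈ s.erase a, ((s.erase a).erase b).card = n - 2 := by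
        intro b hb
        obtain ⟨hba, hbs⟩ := Finset.mem_erase.mp hb
        rw [Finset.card_erase_of_mem hb, Finset.card_erase_of_mem ha, hcard]
        clear hfib hfiber
        omega
      have hsum : ∀ b ∈ s.erase a, (pOn ((s.erase a).erase b)).card
          = if Even (n-2) then (n - 3)‼ else 0 := by
        intro b hb
        clear hfib hfiber
        have := IH (n-2) (by omega) _ (hcard' b hb)
        rwa [show n - 2 - 1 = n - 3 by omega] at this
      rw [Finset.sum_congr rfl hsum, Finset.sum_const, Finset.card_erase_of_mem ha, hcard]
      clear hfib hfiber hcard' hsum IH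
      rcases Nat.even_or_odd n with hev | hod
      · have h2 : 2 ≤ n := by
          rcases hev with ⟨m, hm⟩; omega
        have hev2 : Even (n - 2) := by
          rcases hev with ⟨m, hm⟩; exact ⟨m - 1, by omega⟩
        rw [if_pos hev2, if_pos hev, smul_eq_mul]
        rcases Nat.lt_or_ge n 4 with h | h
        · have : n = 2 := by
            rcases hev with ⟨m, hm⟩; omega
          subst this; decide
        · have h1 : n - 1 = (n - 3) + 2 := by omega
          rw [h1, Nat.doubleFactorial_add_two]
      · rw [if_neg (Nat.not_even_iff_odd.mpr hod)]
        rcases Nat.lt_or_ge n 2 with h | h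
        · have : n = 1 := by omega
          subst this; simp
        · have : ¬ Even (n - 2) := by
            rcases hod with ⟨m, hm⟩
            intro ⟨j, hj⟩; omega
          rw [if_neg this, smul_zero]

end ECAux



namespace ECAux

open Finset Nat

lemma pairings_eq (k : ℕ) : pairings k = pOn (univ : Finset (Fin (2*k))) := by
  ext f
  simp only [pairings, mem_pOn, Finset.mem_filter, Finset.mem_univ, true_and, IsPairing]
  constructor
  · rintro ⟨h1, h2⟩
    exact ⟨h1, fun i => ⟨fun _ => ⟨h2 i, trivial⟩, fun h => (h trivial).elim⟩⟩
  · rintro ⟨h1, h2⟩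
    exact ⟨h1, fun i => ((h2 i).1 trivial).1⟩

lemma card_pairings (k : ℕ) : (pairings k).card = (2*k - 1)‼ := by
  rw [pairings_eq, card_pOn (2*k) _ (by simp), if_pos ⟨k, two_mul k⟩]

lemma mem_pairings {k : ℕ} {f : Fin (2*k) → Fin (2*k)} :
    f ∈ pairings k ↔ (∀ i, f (f i) = i) ∧ ∀ i, f i ≠ i := by
  simp [pairings, IsPairing]

lemma circBtw_ne {n : ℕ} {a b x : Fin n} (h : CircBtw a b x) : x ≠ a ∧ x ≠ b := by
  obtain ⟨h1, h2⟩ := h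
  constructor
  · rintro rfl
    haveI : NeZero n := ⟨x.pos.ne'⟩
    rw [Fin.sub_self] at h1
    simp at h1
  · rintro rfl; exact absurd rfl (Nat.ne_of_lt h2)

lemma not_crossVert_iff {k : ℕ} {f : Fin (2*k) → Fin (2*k)} (hinv : ∀ i, f (f i) = i)
    (i : Fin (2*k)) :
    ¬ CrossVert f i ↔ ∀ x, CircBtw i (f i) x → CircBtw i (f i) (f x) := by
  constructor
  · intro h x hx
    by_contra hfx
    apply h
    obtain ⟨hxi, hxfi⟩ := circBtw_ne hx
    exact ⟨x, hxi, hxfi, Or.inl ⟨hx, hfx⟩⟩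
  · rintro h ⟨j, hji, hjfi, hcross⟩
    rcases hcross with ⟨hj, hnfj⟩ | ⟨hfj, hnj⟩
    · exact hnfj (h j hj)
    · have := h (f j) hfj
      rw [hinv] at this
      exact hnj this

end ECAux

namespace ECAux

instance {n : ℕ} (a b x : Fin n) : Decidable (CircBtw a b x) :=
  inferInstanceAs (Decidable (_ ∧ _))

instance {n : ℕ} (f : Fin n → Fin n) (i j : Fin n) : Decidable (ChordsCross f i j) :=
  inferInstanceAs (Decidable (_ ∨ _))

instance {n : ℕ} (f : Fin n → Fin n) (i : Fin n) : Decidable (CrossVert f i) :=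
  inferInstanceAs (Decidable (∃ _, _))

variable {k : ℕ}

/-- arc strictly between i and j -/
def arcB (i j : Fin (2*k)) : Finset (Fin (2*k)) := univ.filter (fun x => CircBtw i j x)

/-- complement arc: everything except i, j and the arc between -/
def arcC (i j : Fin (2*k)) : Finset (Fin (2*k)) :=
  univ.filter (fun x => x ≠ i ∧ x ≠ j ∧ ¬ CircBtw i j x)

lemma mem_arcB {i j x : Fin (2*k)} : x ∈ arcB i j ↔ CircBtw i j x := by simp [arcB]

lemma mem_arcC {i j x : Fin (2*k)} :
    x ∈ arcC i j ↔ x ≠ i ∧ x ≠ j ∧ ¬ CircBtw i j x := by simp [arcC]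

/-- restriction of a pairing to the arc B -/
def cutB (i j : Fin (2*k)) (f : Fin (2*k) → Fin (2*k)) : Fin (2*k) → Fin (2*k) :=
  fun x => if CircBtw i j x then f x else x

/-- restriction of a pairing to the complementary arc C -/
def cutC (i j : Fin (2*k)) (f : Fin (2*k) → Fin (2*k)) : Fin (2*k) → Fin (2*k) :=
  fun x => if x ≠ i ∧ x ≠ j ∧ ¬ CircBtw i j x then f x else x

/-- glue pairings of the two arcs together with the chord i—j -/
def glue (i j : Fin (2*k)) (g₁ g₂ : Fin (2*k) → Fin (2*k)) : Fin (2*k) → Fin (2*k) :=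
  fun x => if x = i then j else if x = j then i
    else if CircBtw i j x then g₁ x else g₂ x

lemma glue_i {i j : Fin (2*k)} (g₁ g₂) : glue i j g₁ g₂ i = j := by simp [glue]

lemma glue_j {i j : Fin (2*k)} (hji : j ≠ i) (g₁ g₂) : glue i j g₁ g₂ j = i := by
  simp [glue, if_neg hji]

lemma glue_B {i j : Fin (2*k)} (g₁ g₂) {x} (hx : CircBtw i j x) :
    glue i j g₁ g₂ x = g₁ x := by
  obtain ⟨h1, h2⟩ := circBtw_ne hx
  simp only [glue, if_neg h1, if_neg h2, if_pos hx]

lemma glue_C {i j : Fin (2*k)} (g₁ g₂) {x} (h1 : x ≠ i) (h2 : x ≠ j)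
    (h3 : ¬ CircBtw i j x) : glue i j g₁ g₂ x = g₂ x := by
  simp only [glue, if_neg h1, if_neg h2, if_neg h3]

lemma card_fiber (i j : Fin (2*k)) (hji : j ≠ i) :
    ((pairings k).filter
        (fun f => f i = j ∧ ∀ x, CircBtw i j x → CircBtw i j (f x))).card
      = (pOn (arcB i j)).card * (pOn (arcC i j)).card := by
  rw [← Finset.card_product]
  apply Finset.card_bij'
    (i := fun f _ => (cutB i j f, cutC i j f))
    (j := fun g _ => glue i j g.1 g.2)
  · -- forward membership
    intro f hf
    rw [Finset.mem_filter, mem_pairings] at hf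
    obtain ⟨⟨hinv, hnfix⟩, hfi, hB⟩ := hf
    have hfj : f j = i := by rw [← hfi, hinv]
    have hC : ∀ x, x ≠ i → x ≠ j → ¬ CircBtw i j x →
        f x ≠ i ∧ f x ≠ j ∧ ¬ CircBtw i j (f x) := by
      intro x hxi hxj hxB
      refine ⟨?_, ?_, ?_⟩
      · intro h; apply hxj; rw [← hinv x, h, hfi]
      · intro h; apply hxi; rw [← hinv x, h, hfj]
      · intro h; apply hxB; have := hB _ h; rwa [hinv] at this
    rw [Finset.mem_product]
    constructor
    · rw [mem_pOn]
      constructor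
      · intro x
        by_cases hx : CircBtw i j x
        · have hfx := hB x hx
          simp only [cutB, if_pos hx, if_pos hfx, hinv]
        · simp only [cutB, if_neg hx]
      · intro x
        constructor
        · intro hx
          rw [mem_arcB] at hx
          have hfx := hB x hx
          simp only [cutB, if_pos hx]
          exact ⟨hnfix x, mem_arcB.mpr hfx⟩
        · intro hx
          rw [mem_arcB] at hx
          simp only [cutB, if_neg hx]
    · rw [mem_pOn]
      constructor
      · intro x
        by_cases hx : x ≠ i ∧ x ≠ j ∧ ¬ CircBtw i j x
        · obtain ⟨h1, h2, h3⟩ := hC x hx.1 hx.2.1 hx.2.2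
          simp only [cutC, if_pos hx, if_pos (⟨h1, h2, h3⟩ : _ ∧ _ ∧ _), hinv]
        · simp only [cutC, if_neg hx]
      · intro x
        constructor
        · intro hx
          rw [mem_arcC] at hx
          obtain ⟨h1, h2, h3⟩ := hC x hx.1 hx.2.1 hx.2.2
          simp only [cutC, if_pos hx]
          exact ⟨hnfix x, mem_arcC.mpr ⟨h1, h2, h3⟩⟩
        · intro hx
          rw [mem_arcC] at hx
          simp only [cutC, if_neg hx]
  · -- backward membership
    intro g hg
    rw [Finset.mem_product, mem_pOn, mem_pOn] at hg
    obtain ⟨⟨hinv1, hmem1⟩, hinv2, hmem2⟩ := hg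
    have hBfact : ∀ x, CircBtw i j x → g.1 x ≠ x ∧ CircBtw i j (g.1 x) := by
      intro x hx
      have := (hmem1 x).1 (mem_arcB.mpr hx)
      exact ⟨this.1, mem_arcB.mp this.2⟩
    have hCfact : ∀ x, x ≠ i → x ≠ j → ¬ CircBtw i j x →
        g.2 x ≠ x ∧ (g.2 x ≠ i ∧ g.2 x ≠ j ∧ ¬ CircBtw i j (g.2 x)) := by
      intro x h1 h2 h3
      have := (hmem2 x).1 (mem_arcC.mpr ⟨h1, h2, h3⟩)
      exact ⟨this.1, mem_arcC.mp this.2⟩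
    rw [Finset.mem_filter, mem_pairings]
    refine ⟨⟨?_, ?_⟩, ?_, ?_⟩
    · -- involution
      intro x
      by_cases hxi : x = i
      · rw [hxi, glue_i, glue_j hji]
      by_cases hxj : x = j
      · rw [hxj, glue_j hji, glue_i]
      by_cases hx : CircBtw i j x
      · obtain ⟨-, hgx⟩ := hBfact x hx
        rw [glue_B _ _ hx, glue_B _ _ hgx, hinv1]
      · obtain ⟨-, h1, h2, h3⟩ := hCfact x hxi hxj hx
        rw [glue_C _ _ hxi hxj hx, glue_C _ _ h1 h2 h3, hinv2]
    · -- fixed point free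
      intro x
      by_cases hxi : x = i
      · rw [hxi, glue_i]; exact hji
      by_cases hxj : x = j
      · rw [hxj, glue_j hji]; exact Ne.symm hji
      by_cases hx : CircBtw i j x
      · rw [glue_B _ _ hx]; exact (hBfact x hx).1
      · rw [glue_C _ _ hxi hxj hx]; exact (hCfact x hxi hxj hx).1
    · exact glue_i _ _
    · -- closure
      intro x hx
      rw [glue_B _ _ hx]
      exact (hBfact x hx).2
  · -- left inverse
    intro f hf
    rw [Finset.mem_filter, mem_pairings] at hf
    obtain ⟨⟨hinv, hnfix⟩, hfi, hB⟩ := hf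
    have hfj : f j = i := by rw [← hfi, hinv]
    funext x
    by_cases hxi : x = i
    · rw [hxi, glue_i, hfi]
    by_cases hxj : x = j
    · rw [hxj, glue_j hji, hfj]
    by_cases hx : CircBtw i j x
    · rw [glue_B _ _ hx]; simp only [cutB, if_pos hx]
    · rw [glue_C _ _ hxi hxj hx]
      simp only [cutC, if_pos (⟨hxi, hxj, hx⟩ : _ ∧ _ ∧ _)]
  · -- right inverse
    intro g hg
    rw [Finset.mem_product, mem_pOn, mem_pOn] at hg
    obtain ⟨⟨hinv1, hmem1⟩, hinv2, hmem2⟩ := hg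
    have e1 : ∀ x, ¬ CircBtw i j x → g.1 x = x := by
      intro x hx
      exact (hmem1 x).2 (fun h => hx (mem_arcB.mp h))
    have e2 : ∀ x, ¬ (x ≠ i ∧ x ≠ j ∧ ¬ CircBtw i j x) → g.2 x = x := by
      intro x hx
      exact (hmem2 x).2 (fun h => hx (mem_arcC.mp h))
    have hgi : g.1 i = i := e1 i (fun h => (circBtw_ne h).1 rfl)
    have hgj : g.1 j = j := e1 j (fun h => (circBtw_ne h).2 rfl)
    apply Prod.ext
    · funext x
      by_cases hx : CircBtw i j x
      · simp only [cutB, if_pos hx, glue_B _ _ hx]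
      · simp only [cutB, if_neg hx]
        exact (e1 x hx).symm
    · funext x
      by_cases hx : x ≠ i ∧ x ≠ j ∧ ¬ CircBtw i j x
      · obtain ⟨h1, h2, h3⟩ := hx
        simp only [cutC, if_pos (⟨h1, h2, h3⟩ : _ ∧ _ ∧ _), glue_C _ _ h1 h2 h3]
      · simp only [cutC, if_neg hx]
        exact (e2 x hx).symm

lemma i_notmem_arcB {i j : Fin (2*k)} : i ∉ arcB i j :=
  fun h => (circBtw_ne (mem_arcB.mp h)).1 rfl

lemma j_notmem_arcB {i j : Fin (2*k)} : j ∉ arcB i j :=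
  fun h => (circBtw_ne (mem_arcB.mp h)).2 rfl

open Fin.NatCast in
lemma card_arcB (hk : 0 < k) (i j : Fin (2*k)) :
    (arcB i j).card = (j - i).val - 1 := by
  haveI : NeZero (2*k) := ⟨by omega⟩
  have := Finset.card_bij (fun (x : Fin (2*k)) (_ : x ∈ arcB i j) => (x - i).val)
    (t := Finset.Ioo 0 ((j - i).val))
    (fun x hx => by
      obtain ⟨h1, h2⟩ := mem_arcB.mp hx
      exact Finset.mem_Ioo.mpr ⟨h1, h2⟩)
    (fun x₁ h₁ x₂ h₂ h => by
      have : x₁ - i = x₂ - i := Fin.ext h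
      exact sub_left_injective this)
    (fun m hm => by
      obtain ⟨hm1, hm2⟩ := Finset.mem_Ioo.mp hm
      have hmlt : m < 2*k := lt_of_lt_of_le hm2 (Nat.le_of_lt_succ (Nat.lt_succ_of_lt (j - i).isLt))
      refine ⟨i + (m : Fin (2*k)), ?_, ?_⟩
      · rw [mem_arcB]
        constructor <;>
          simp only [add_sub_cancel_left, Fin.val_cast_of_lt hmlt]
        · exact hm1
        · exact hm2
      · simp only [add_sub_cancel_left, Fin.val_cast_of_lt hmlt])
  rw [this, Nat.card_Ioo]
  omega

lemma card_arcC (hk : 0 < k) (i j : Fin (2*k)) (hji : j ≠ i) :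
    (arcC i j).card = 2*k - 1 - (j - i).val := by
  haveI : NeZero (2*k) := ⟨by omega⟩
  have hsplit : arcC i j = univ \ insert i (insert j (arcB i j)) := by
    ext x
    simp only [mem_arcC, Finset.mem_sdiff, Finset.mem_univ, true_and, Finset.mem_insert,
      mem_arcB]
    tauto
  have hinotin : i ∉ insert j (arcB i j) :=
    fun h => (Finset.mem_insert.mp h).elim (fun h => hji h.symm) (fun h => i_notmem_arcB h)
  have hd1 : 1 ≤ (j - i).val := by
    have : (j - i).val ≠ 0 := by
      intro h; exact sub_ne_zero_of_ne hji (Fin.ext (by rw [h]; simp))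
    omega
  have hd2 : (j - i).val < 2*k := (j - i).isLt
  rw [hsplit, Finset.card_sdiff_of_subset (Finset.subset_univ _), Finset.card_insert_of_notMem hinotin,
    Finset.card_insert_of_notMem j_notmem_arcB, card_arcB hk, Finset.card_univ,
    Fintype.card_fin]
  omega

/-- The number of pairings in which a fixed vertex is not crossed. -/
def N₀ (k : ℕ) : ℕ := ∑ s ∈ Finset.range k, (2*s - 1)‼ * (2*(k - 1 - s) - 1)‼

open Fin.NatCast in
lemma count_noCross (hk : 0 < k) (i : Fin (2*k)) :
    ((pairings k).filter (fun f => ¬ CrossVert f i)).card = N₀ k := by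
  classical
  haveI : NeZero (2*k) := ⟨by omega⟩
  set s₀ := (pairings k).filter (fun f => ¬ CrossVert f i) with hs₀
  have hfib : s₀.card = ∑ j ∈ univ.erase i, (s₀.filter (fun f => f i = j)).card := by
    apply Finset.card_eq_sum_card_fiberwise
    intro f hf
    rw [hs₀, Finset.mem_coe, Finset.mem_filter, mem_pairings] at hf
    exact Finset.mem_erase.mpr ⟨hf.1.2 i, Finset.mem_univ _⟩
  have hfibval : ∀ j ∈ univ.erase i, (s₀.filter (fun f => f i = j)).card
      = (if Even ((j - i).val - 1) then ((j - i).val - 1 - 1)‼ else 0)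
        * (if Even (2*k - 1 - (j - i).val) then (2*k - 1 - (j - i).val - 1)‼ else 0) := by
    intro j hj
    have hji : j ≠ i := (Finset.mem_erase.mp hj).1
    have heq : s₀.filter (fun f => f i = j)
        = (pairings k).filter
            (fun f => f i = j ∧ ∀ x, CircBtw i j x → CircBtw i j (f x)) := by
      ext f
      rw [hs₀]
      simp only [Finset.mem_filter, and_assoc]
      constructor
      · rintro ⟨hp, hnc, hfij⟩
        refine ⟨hp, hfij, ?_⟩
        have := (not_crossVert_iff (mem_pairings.mp hp).1 i).mp hnc
        rwa [hfij] at this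
      · rintro ⟨hp, hfij, hcl⟩
        refine ⟨hp, ?_, hfij⟩
        rw [not_crossVert_iff (mem_pairings.mp hp).1 i, hfij]
        exact hcl
    rw [heq, card_fiber i j hji, card_pOn _ _ (card_arcB hk i j),
      card_pOn _ _ (card_arcC hk i j hji)]
  rw [hfib, Finset.sum_congr rfl hfibval]
  clear hfib hfibval
  clear_value s₀
  clear hs₀ s₀
  -- reindex over d = (j - i).val
  have hreindex : ∑ j ∈ univ.erase i,
      ((if Even ((j - i).val - 1) then ((j - i).val - 1 - 1)‼ else 0)
        * (if Even (2*k - 1 - (j - i).val) then (2*k - 1 - (j - i).val - 1)‼ else 0))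
      = ∑ d ∈ Finset.Icc 1 (2*k - 1),
        ((if Even (d - 1) then (d - 1 - 1)‼ else 0)
          * (if Even (2*k - 1 - d) then (2*k - 1 - d - 1)‼ else 0)) := by
    apply Finset.sum_nbij' (i := fun j => (j - i).val) (j := fun d => i + (d : Fin (2*k)))
    · intro j hj
      have hji : j ≠ i := (Finset.mem_erase.mp hj).1
      have hd1 : 1 ≤ (j - i).val := by
        have : (j - i).val ≠ 0 := by
          intro h; exact sub_ne_zero_of_ne hji (Fin.ext (by rw [h]; simp))
        omega
      have hd2 : (j - i).val < 2*k := (j - i).isLt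
      exact Finset.mem_Icc.mpr ⟨hd1, by omega⟩
    · intro d hd
      obtain ⟨hd1, hd2⟩ := Finset.mem_Icc.mp hd
      have hdlt : d < 2*k := by omega
      refine Finset.mem_erase.mpr ⟨?_, Finset.mem_univ _⟩
      intro h
      have h0 : (d : Fin (2*k)) = 0 := add_eq_left.mp h
      have : ((d : Fin (2*k)) : ℕ) = 0 := by rw [h0]; simp
      rw [Fin.val_cast_of_lt hdlt] at this
      omega
    · intro j hj
      rw [Fin.cast_val_eq_self, add_sub_cancel]
    · intro d hd
      obtain ⟨hd1, hd2⟩ := Finset.mem_Icc.mp hd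
      have hdlt : d < 2*k := by omega
      rw [add_sub_cancel_left, Fin.val_cast_of_lt hdlt]
    · intro j hj
      rfl
  rw [hreindex]
  clear hreindex
  -- restrict to odd d and reindex by s = d / 2
  rw [← Finset.sum_filter_of_ne (p := fun d => Odd d)
    (by
      intro d hd hne
      by_contra hodd
      rw [Nat.not_odd_iff_even] at hodd
      obtain ⟨hd1, _⟩ := Finset.mem_Icc.mp hd
      have : ¬ Even (d - 1) := by
        rcases hodd with ⟨m, hm⟩
        intro ⟨l, hl⟩; omega
      rw [if_neg this, zero_mul] at hne
      exact hne rfl)]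
  have := Finset.sum_nbij' (i := fun d => d / 2) (j := fun s => 2*s + 1)
    (s := (Finset.Icc 1 (2*k - 1)).filter (fun d => Odd d))
    (t := Finset.range k)
    (f := fun d => (if Even (d - 1) then (d - 1 - 1)‼ else 0)
          * (if Even (2*k - 1 - d) then (2*k - 1 - d - 1)‼ else 0))
    (g := fun s => (2*s - 1)‼ * (2*(k - 1 - s) - 1)‼)
    (by
      intro d hd
      obtain ⟨hd', hodd⟩ := Finset.mem_filter.mp hd
      obtain ⟨hd1, hd2⟩ := Finset.mem_Icc.mp hd'
      rw [Nat.odd_iff] at hodd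
      show d / 2 ∈ Finset.range k
      exact Finset.mem_range.mpr (by omega))
    (by
      intro s hs
      have hs' := Finset.mem_range.mp hs
      show 2*s + 1 ∈ (Finset.Icc 1 (2*k - 1)).filter (fun d => Odd d)
      refine Finset.mem_filter.mpr ⟨Finset.mem_Icc.mpr ⟨by omega, by omega⟩, ⟨s, by omega⟩⟩)
    (by
      intro d hd
      obtain ⟨hd', hodd⟩ := Finset.mem_filter.mp hd
      rw [Nat.odd_iff] at hodd
      show 2 * (d / 2) + 1 = d
      omega)
    (by intro s hs; show (2*s + 1) / 2 = s; omega)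
    (by
      intro d hd
      obtain ⟨hd', hodd⟩ := Finset.mem_filter.mp hd
      obtain ⟨hd1, hd2⟩ := Finset.mem_Icc.mp hd'
      obtain ⟨s, rfl⟩ : ∃ s, d = 2*s + 1 := by
        rw [Nat.odd_iff] at hodd
        exact ⟨d / 2, by omega⟩
      have hsk : s < k := by omega
      have h1 : Even (2*s + 1 - 1) := by
        rw [show 2*s + 1 - 1 = 2*s by omega]
        exact ⟨s, by omega⟩
      have h2 : Even (2*k - 1 - (2*s + 1)) := by
        refine ⟨k - 1 - s, by omega⟩
      show (if Even (2*s + 1 - 1) then (2*s + 1 - 1 - 1)‼ else 0)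
          * (if Even (2*k - 1 - (2*s + 1)) then (2*k - 1 - (2*s + 1) - 1)‼ else 0)
        = (2*((2*s + 1) / 2) - 1)‼ * (2*(k - 1 - (2*s + 1) / 2) - 1)‼
      rw [if_pos h1, if_pos h2,
        show 2*s + 1 - 1 - 1 = 2*((2*s + 1) / 2) - 1 by omega,
        show 2*k - 1 - (2*s + 1) - 1 = 2*(k - 1 - (2*s + 1) / 2) - 1 by omega])
  rw [this]
  rfl

lemma sum_crossCount (hk : 0 < k) :
    ∑ f ∈ pairings k, crossCount k f = 2*k * ((2*k - 1)‼ - N₀ k) := by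
  classical
  have h1 : ∀ f, crossCount k f = ∑ i : Fin (2*k), if CrossVert f i then 1 else 0 := by
    intro f
    rw [crossCount]
    rw [Finset.card_filter]
    apply Finset.sum_congr rfl
    intro i _
    congr 1
  rw [Finset.sum_congr rfl (fun f _ => h1 f), Finset.sum_comm]
  have h2 : ∀ i : Fin (2*k), ∑ f ∈ pairings k, (if CrossVert f i then 1 else 0)
      = (2*k - 1)‼ - N₀ k := by
    intro i
    rw [← Finset.card_filter]
    have hsplit := Finset.card_filter_add_card_filter_not
      (s := pairings k) (p := fun f => CrossVert f i)
    have hcn : ((pairings k).filter (fun f => ¬ CrossVert f i)).card = N₀ k :=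
      count_noCross hk i
    have hcard := card_pairings k
    have hle : ((pairings k).filter (fun f => CrossVert f i)).card
        + N₀ k = (2*k - 1)‼ := by
      rw [← hcn, ← hcard]
      convert hsplit using 3 <;> simp
    omega
  rw [Finset.sum_congr rfl (fun i _ => h2 i), Finset.sum_const, Finset.card_univ,
    Fintype.card_fin, smul_eq_mul]

lemma N₀_le (hk : 0 < k) : N₀ k ≤ (2*k - 1)‼ := by
  rw [← count_noCross hk ⟨0, by omega⟩, ← card_pairings k]
  exact Finset.card_le_card (Finset.filter_subset _ _)

lemma expCross_eq_master (hk : 0 < k) :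
    expCross k = 2*k - 2*k * (N₀ k : ℚ) / ((2*k - 1)‼ : ℚ) := by
  have hsum := sum_crossCount (k := k) hk
  have hcard := card_pairings k
  have hle := N₀_le (k := k) hk
  have hpos : (0:ℚ) < ((2*k - 1)‼ : ℚ) := by
    exact_mod_cast Nat.doubleFactorial_pos _
  rw [expCross]
  have hQ : (∑ f ∈ pairings k, (crossCount k f : ℚ))
      = ((2*k : ℕ) : ℚ) * (((2*k - 1)‼ : ℕ) - (N₀ k : ℕ)) := by
    rw [← Nat.cast_sum]
    rw [hsum]
    push_cast [hle]
    ring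
  rw [hQ, hcard]
  field_simp
  push_cast
  ring

lemma fact_two_mul (m : ℕ) : (2*m)! = 2^m * m ! * (2*m - 1)‼ := by
  cases m with
  | zero => decide
  | succ m =>
    have h : 2*(m+1) = (2*m + 1) + 1 := by ring
    rw [h, Nat.factorial_eq_mul_doubleFactorial (2*m + 1)]
    rw [show 2*m + 1 + 1 = 2*(m+1) by ring, Nat.doubleFactorial_two_mul]
    rw [show 2*(m+1) - 1 = 2*m + 1 by omega]

lemma term_id {n s : ℕ} (hs : s ≤ n) :
    ((2*s - 1)‼ * (2*(n - s) - 1)‼ * ((2*n).choose (2*s)) : ℚ)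
      = ((2*n - 1)‼ : ℚ) * (n.choose s) := by
  have e1 : ((2*s)! : ℚ) = 2^s * (s)! * (2*s - 1)‼ := by exact_mod_cast fact_two_mul s
  have e2 : ((2*(n-s))! : ℚ) = 2^(n-s) * (n-s)! * (2*(n-s) - 1)‼ := by
    exact_mod_cast fact_two_mul (n-s)
  have e3 : ((2*n)! : ℚ) = 2^n * (n)! * (2*n - 1)‼ := by exact_mod_cast fact_two_mul n
  have c1 : (((2*n).choose (2*s)) : ℚ) = (2*n)! / ((2*s)! * (2*(n - s))!) := by
    rw [Nat.cast_choose ℚ (by omega : 2*s ≤ 2*n), show 2*n - 2*s = 2*(n-s) by omega]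
  have c2 : ((n.choose s) : ℚ) = n ! / ((s)! * (n - s)!) := Nat.cast_choose ℚ hs
  rw [c1, c2, e1, e2, e3]
  have hne : ∀ m : ℕ, ((m)! : ℚ) ≠ 0 := fun m => by
    exact_mod_cast (Nat.factorial_pos m).ne'
  have hps : (2:ℚ)^s ≠ 0 := pow_ne_zero _ two_ne_zero
  have hpn : (2:ℚ)^n ≠ 0 := pow_ne_zero _ two_ne_zero
  have hpns : (2:ℚ)^(n-s) ≠ 0 := pow_ne_zero _ two_ne_zero
  have hdf : ∀ m : ℕ, ((m‼ : ℕ) : ℚ) ≠ 0 := fun m => by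
    exact_mod_cast (Nat.doubleFactorial_pos m).ne'
  field_simp
  rw [show ((2:ℚ))^n = 2^s * 2^(n-s) by rw [← pow_add]; congr 1; omega]

lemma dfact_succ (hk : 0 < k) : (2*k - 1)‼ = (2*k - 1) * (2*(k-1) - 1)‼ := by
  obtain ⟨m, rfl⟩ : ∃ m, k = m + 1 := ⟨k - 1, by omega⟩
  rw [show 2*(m+1) - 1 = 2*m + 1 by omega, show (m+1) - 1 = m by omega,
    Nat.doubleFactorial_add_one]

/-- the sum of binomial ratios -/
noncomputable def Sq (k : ℕ) : ℚ :=
  ∑ s ∈ Finset.range k, ((k-1).choose s : ℚ) / (((2*(k-1)).choose (2*s)) : ℚ)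

lemma expCross_eq_sq (hk : 0 < k) :
    expCross k = 2*k - (2*k / (2*k - 1 : ℚ)) * Sq k := by
  rw [expCross_eq_master hk]
  have hchoose_ne : ∀ s ∈ Finset.range k, (((2*(k-1)).choose (2*s)) : ℚ) ≠ 0 := by
    intro s hs
    have : 2*s ≤ 2*(k-1) := by have := Finset.mem_range.mp hs; omega
    exact_mod_cast (Nat.choose_pos this).ne'
  have hN : (N₀ k : ℚ) = ((2*(k-1) - 1)‼ : ℚ) * Sq k := by
    rw [N₀, Sq, Nat.cast_sum, Finset.mul_sum]
    apply Finset.sum_congr rfl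
    intro s hs
    have hs' : s ≤ k - 1 := by have := Finset.mem_range.mp hs; omega
    have key := term_id (n := k-1) (s := s) hs'
    have h2 : (((2*(k-1)).choose (2*s)) : ℚ) ≠ 0 := hchoose_ne s hs
    push_cast at key ⊢
    rw [← mul_div_assoc, eq_div_iff h2]
    linear_combination key
  have hd : ((2*k - 1)‼ : ℚ) = (2*k - 1 : ℕ) * ((2*(k-1) - 1)‼ : ℚ) := by
    exact_mod_cast congrArg (Nat.cast : ℕ → ℚ) (dfact_succ hk)
  rw [hN, hd]
  have h1 : ((2*k - 1 : ℕ) : ℚ) = 2*k - 1 := by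
    have h : 1 ≤ 2*k := by omega
    rw [Nat.cast_sub h]
    push_cast
    ring
  have h2 : ((2*(k-1) - 1)‼ : ℚ) ≠ 0 := by
    exact_mod_cast (Nat.doubleFactorial_pos _).ne'
  have h3 : (2*k - 1 : ℚ) ≠ 0 := by
    have : (2:ℚ) ≤ 2*k := by exact_mod_cast (by omega : 2 ≤ 2*k)
    linarith
  rw [h1]
  field_simp

lemma spread (m : ℕ) : ∀ (d u : ℕ), m + d ≤ u + 1 →
    (2*(m + d) - 1)‼ * (2*u - 1)‼ ≤ (2*m - 1)‼ * (2*(u + d) - 1)‼ := by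
  intro d
  induction d with
  | zero => intro u _; simp
  | succ d IH =>
    intro u hle
    have h1 : (2*(m + (d+1)) - 1)‼ = (2*(m+d) + 1) * (2*(m+d) - 1)‼ := by
      rw [show 2*(m + (d+1)) - 1 = 2*(m+d) + 1 by omega]
      exact Nat.doubleFactorial_add_one (2*(m+d))
    have h2 : (2*(u+1) - 1)‼ = (2*u + 1) * (2*u - 1)‼ := by
      rw [show 2*(u+1) - 1 = 2*u + 1 by omega]
      exact Nat.doubleFactorial_add_one (2*u)
    calc (2*(m + (d+1)) - 1)‼ * (2*u - 1)‼
        = (2*(m+d) + 1) * ((2*(m+d) - 1)‼ * (2*u - 1)‼) := by rw [h1]; ring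
      _ ≤ (2*u + 1) * ((2*(m+d) - 1)‼ * (2*u - 1)‼) :=
          mul_le_mul_left (by omega) _
      _ = (2*(m+d) - 1)‼ * ((2*u + 1) * (2*u - 1)‼) := by ring
      _ = (2*(m+d) - 1)‼ * (2*(u+1) - 1)‼ := by rw [h2]
      _ ≤ (2*m - 1)‼ * (2*((u+1) + d) - 1)‼ := IH (u+1) (by omega)
      _ = (2*m - 1)‼ * (2*(u + (d+1)) - 1)‼ := by rw [show (u+1)+d = u + (d+1) by omega]

lemma a_mid {s : ℕ} (hk : 10 ≤ k) (h3 : 3 ≤ s) (h4 : s ≤ k - 4) :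
    (2*s - 1)‼ * (2*(k - 1 - s) - 1)‼ ≤ 15 * (2*(k-4) - 1)‼ := by
  have hu3 : 3 ≤ k - 1 - s := by omega
  rcases le_total s (k - 1 - s) with h | h
  · have := spread 3 (s - 3) (k - 1 - s) (by omega)
    rw [show 3 + (s - 3) = s by omega,
      show (k - 1 - s) + (s - 3) = k - 4 by omega,
      show (2*3 - 1)‼ = 15 from rfl] at this
    exact this
  · have := spread 3 ((k - 1 - s) - 3) s (by omega)
    rw [show 3 + ((k - 1 - s) - 3) = k - 1 - s by omega,
      show s + ((k - 1 - s) - 3) = k - 4 by omega,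
      show (2*3 - 1)‼ = 15 from rfl] at this
    calc (2*s - 1)‼ * (2*(k - 1 - s) - 1)‼
        = (2*(k - 1 - s) - 1)‼ * (2*s - 1)‼ := by ring
      _ ≤ 15 * (2*(k-4) - 1)‼ := this

lemma N₀_lb (hk : 10 ≤ k) :
    2*(2*(k-1) - 1)‼ + 2*(2*(k-2) - 1)‼ ≤ N₀ k := by
  have hPsub : ({0, 1, k-2, k-1} : Finset ℕ) ⊆ Finset.range k := by
    intro x hx
    simp only [Finset.mem_insert, Finset.mem_singleton] at hx
    rw [Finset.mem_range]
    omega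
  have hPsum : ∑ s ∈ ({0, 1, k-2, k-1} : Finset ℕ),
      (2*s - 1)‼ * (2*(k - 1 - s) - 1)‼
      = 2*(2*(k-1) - 1)‼ + 2*(2*(k-2) - 1)‼ := by
    rw [show ({0, 1, k-2, k-1} : Finset ℕ)
        = insert 0 (insert 1 (insert (k-2) ({k-1} : Finset ℕ))) from rfl]
    rw [Finset.sum_insert (by simp; omega), Finset.sum_insert (by simp; omega),
      Finset.sum_insert (by simp; omega), Finset.sum_singleton]
    rw [show (2*0 - 1)‼ = 1 from rfl, show (2*1 - 1)‼ = 1 from rfl,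
      show k - 1 - 0 = k - 1 from rfl,
      show 2*(k - 1 - 1) - 1 = 2*(k-2) - 1 by omega,
      show 2*(k - 1 - (k-2)) - 1 = 2*1 - 1 by omega,
      show 2*(k - 1 - (k-1)) - 1 = 2*0 - 1 by omega,
      show (2*1 - 1)‼ = 1 from rfl, show (2*0 - 1)‼ = 1 from rfl]
    ring
  calc 2*(2*(k-1) - 1)‼ + 2*(2*(k-2) - 1)‼
      = ∑ s ∈ ({0, 1, k-2, k-1} : Finset ℕ), (2*s - 1)‼ * (2*(k - 1 - s) - 1)‼ :=
        hPsum.symm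
    _ ≤ ∑ s ∈ Finset.range k, (2*s - 1)‼ * (2*(k - 1 - s) - 1)‼ :=
        Finset.sum_le_sum_of_subset hPsub
    _ = N₀ k := rfl

lemma N₀_ub (hk : 10 ≤ k) :
    N₀ k ≤ 2*(2*(k-1) - 1)‼ + 2*(2*(k-2) - 1)‼ + 6*(2*(k-3) - 1)‼
      + 15*k*(2*(k-4) - 1)‼ := by
  classical
  set P : Finset ℕ := {0, 1, k-2, k-1} with hP
  have hPsub : P ⊆ Finset.range k := by
    intro x hx
    simp only [hP, Finset.mem_insert, Finset.mem_singleton] at hx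
    rw [Finset.mem_range]
    omega
  have hPsum : ∑ s ∈ P, (2*s - 1)‼ * (2*(k - 1 - s) - 1)‼
      = 2*(2*(k-1) - 1)‼ + 2*(2*(k-2) - 1)‼ := by
    rw [show P = insert 0 (insert 1 (insert (k-2) ({k-1} : Finset ℕ))) from rfl]
    rw [Finset.sum_insert (by simp; omega), Finset.sum_insert (by simp; omega),
      Finset.sum_insert (by simp; omega), Finset.sum_singleton]
    rw [show (2*0 - 1)‼ = 1 from rfl, show (2*1 - 1)‼ = 1 from rfl,
      show k - 1 - 0 = k - 1 from rfl,
      show 2*(k - 1 - 1) - 1 = 2*(k-2) - 1 by omega,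
      show 2*(k - 1 - (k-2)) - 1 = 2*1 - 1 by omega,
      show 2*(k - 1 - (k-1)) - 1 = 2*0 - 1 by omega,
      show (2*1 - 1)‼ = 1 from rfl, show (2*0 - 1)‼ = 1 from rfl]
    ring
  set Q : Finset ℕ := {2, k-3} with hQ
  have hQsub : Q ⊆ Finset.range k \ P := by
    intro x hx
    simp only [hQ, Finset.mem_insert, Finset.mem_singleton] at hx
    simp only [Finset.mem_sdiff, Finset.mem_range, hP, Finset.mem_insert,
      Finset.mem_singleton]
    omega
  have hQsum : ∑ s ∈ Q, (2*s - 1)‼ * (2*(k - 1 - s) - 1)‼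
      = 6*(2*(k-3) - 1)‼ := by
    rw [show Q = insert 2 ({k-3} : Finset ℕ) from rfl]
    rw [Finset.sum_insert (by simp; omega), Finset.sum_singleton]
    rw [show (2*2 - 1)‼ = 3 from rfl,
      show 2*(k - 1 - 2) - 1 = 2*(k-3) - 1 by omega,
      show 2*(k - 1 - (k-3)) - 1 = 2*2 - 1 by omega,
      show (2*2 - 1)‼ = 3 from rfl]
    ring
  have hsplit1 : N₀ k = ∑ s ∈ Finset.range k \ P, (2*s - 1)‼ * (2*(k - 1 - s) - 1)‼
      + ∑ s ∈ P, (2*s - 1)‼ * (2*(k - 1 - s) - 1)‼ :=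
    (Finset.sum_sdiff hPsub).symm
  have hsplit2 : ∑ s ∈ Finset.range k \ P, (2*s - 1)‼ * (2*(k - 1 - s) - 1)‼
      = ∑ s ∈ (Finset.range k \ P) \ Q, (2*s - 1)‼ * (2*(k - 1 - s) - 1)‼
        + ∑ s ∈ Q, (2*s - 1)‼ * (2*(k - 1 - s) - 1)‼ :=
    (Finset.sum_sdiff hQsub).symm
  have hrest : ∑ s ∈ (Finset.range k \ P) \ Q, (2*s - 1)‼ * (2*(k - 1 - s) - 1)‼
      ≤ k * (15 * (2*(k-4) - 1)‼) := by
    calc ∑ s ∈ (Finset.range k \ P) \ Q, (2*s - 1)‼ * (2*(k - 1 - s) - 1)‼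
        ≤ ((Finset.range k \ P) \ Q).card * (15 * (2*(k-4) - 1)‼) := by
          apply Finset.sum_le_card_nsmul
          intro x hx
          simp only [Finset.mem_sdiff, Finset.mem_range, hP, hQ, Finset.mem_insert,
            Finset.mem_singleton] at hx
          exact a_mid hk (by omega) (by omega)
      _ ≤ k * (15 * (2*(k-4) - 1)‼) := by
          apply Nat.mul_le_mul_right
          calc ((Finset.range k \ P) \ Q).card
              ≤ (Finset.range k).card :=
                Finset.card_le_card (Finset.sdiff_subset.trans Finset.sdiff_subset)
            _ = k := Finset.card_range k
  have := hsplit1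
  rw [hsplit2, hPsum, hQsum] at this
  rw [show 15*k*(2*(k-4) - 1)‼ = k * (15 * (2*(k-4) - 1)‼) by ring]
  omega

lemma cast_sub_q {a b : ℕ} (h : b ≤ a) : ((a - b : ℕ) : ℚ) = (a : ℚ) - b := by
  rw [Nat.cast_sub h]

lemma asym_large (hk : 10 ≤ k) :
    |expCross k - (2*(k:ℚ) - 2 - 2/(k:ℚ))| ≤ 100 / (k:ℚ)^2 := by
  -- ℕ-level double factorial chain
  have hD : (2*k - 1)‼ = (2*k - 1) * (2*(k-1) - 1)‼ := dfact_succ (by omega)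
  have hDE : (2*(k-1) - 1)‼ = (2*k - 3) * (2*(k-2) - 1)‼ := by
    have h := dfact_succ (k := k-1) (by omega)
    rw [show (k-1) - 1 = k-2 by omega] at h
    rw [h, show 2*(k-1) - 1 = 2*k - 3 by omega]
  have hEG : (2*(k-2) - 1)‼ = (2*k - 5) * (2*(k-3) - 1)‼ := by
    have h := dfact_succ (k := k-2) (by omega)
    rw [show (k-2) - 1 = k-3 by omega] at h
    rw [h, show 2*(k-2) - 1 = 2*k - 5 by omega]
  have hGH : (2*(k-3) - 1)‼ = (2*k - 7) * (2*(k-4) - 1)‼ := by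
    have h := dfact_succ (k := k-3) (by omega)
    rw [show (k-3) - 1 = k-4 by omega] at h
    rw [h, show 2*(k-3) - 1 = 2*k - 7 by omega]
  have hlb := N₀_lb hk
  have hub := N₀_ub hk
  -- ℚ versions
  set K : ℚ := (k : ℚ) with hK
  have hK10 : (10:ℚ) ≤ K := by rw [hK]; exact_mod_cast hk
  have hKpos : (0:ℚ) < K := by linarith
  set H : ℚ := ((2*(k-4) - 1)‼ : ℚ) with hH
  have hHpos : (0:ℚ) < H := by
    rw [hH]; exact_mod_cast Nat.doubleFactorial_pos _
  have hGq : ((2*(k-3) - 1)‼ : ℚ) = (2*K - 7) * H := by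
    rw [hGH]
    push_cast
    rw [cast_sub_q (by omega : 7 ≤ 2*k)]
    push_cast
    ring
  have hEq : ((2*(k-2) - 1)‼ : ℚ) = (2*K - 5) * ((2*K - 7) * H) := by
    rw [hEG]
    push_cast [hGq]
    rw [cast_sub_q (by omega : 5 ≤ 2*k)]
    push_cast
    ring
  have hDq : ((2*(k-1) - 1)‼ : ℚ) = (2*K - 3) * ((2*K - 5) * ((2*K - 7) * H)) := by
    rw [hDE]
    push_cast [hEq]
    rw [cast_sub_q (by omega : 3 ≤ 2*k)]
    push_cast
    ring
  have hDDq : ((2*k - 1)‼ : ℚ)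
      = (2*K - 1) * ((2*K - 3) * ((2*K - 5) * ((2*K - 7) * H))) := by
    rw [hD]
    push_cast [hDq]
    rw [cast_sub_q (by omega : 1 ≤ 2*k)]
    push_cast
    ring
  set N : ℚ := (N₀ k : ℚ) with hN
  have hlbq : 2*((2*K - 3) * ((2*K - 5) * ((2*K - 7) * H)))
      + 2*((2*K - 5) * ((2*K - 7) * H)) ≤ N := by
    rw [hN, ← hDq, ← hEq]
    exact_mod_cast hlb
  have hubq : N ≤ 2*((2*K - 3) * ((2*K - 5) * ((2*K - 7) * H)))
      + 2*((2*K - 5) * ((2*K - 7) * H)) + 6*((2*K - 7) * H) + 15*K*H := by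
    rw [hN, ← hDq, ← hEq, ← hGq]
    calc N ≤ ((2*(k-1) - 1)‼ * 2 + 2*(2*(k-2) - 1)‼ + 6*(2*(k-3) - 1)‼
          + 15*k*(2*(k-4) - 1)‼ : ℕ) := by
          rw [hN]
          exact_mod_cast (by rw [show (2*(k-1) - 1)‼ * 2 = 2 * (2*(k-1) - 1)‼ by ring]; exact hub)
      _ = _ := by
          push_cast
          rw [hDq, hEq, hGq, ← hH, ← hK]
          ring
  -- master formula in these terms
  have hmaster := expCross_eq_master (k := k) (by omega)
  rw [hDDq] at hmaster
  have hNnonneg : 0 ≤ N := by rw [hN]; positivity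
  have hden : (0:ℚ) < (2*K - 1) * ((2*K - 3) * ((2*K - 5) * ((2*K - 7) * H))) := by
    have h1 : (0:ℚ) < 2*K - 1 := by linarith
    have h2 : (0:ℚ) < 2*K - 3 := by linarith
    have h3 : (0:ℚ) < 2*K - 5 := by linarith
    have h4 : (0:ℚ) < 2*K - 7 := by linarith
    positivity
  have hKcast : (2*(k:ℕ) : ℚ) = 2*K := by push_cast; ring
  have key : expCross k - (2*K - 2 - 2/K)
      = ((2*K^2 + 2*K) * ((2*K - 1) * ((2*K - 3) * ((2*K - 5) * ((2*K - 7) * H))))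
          - 2*K^3*N)
        / (K^2 * ((2*K - 1) * ((2*K - 3) * ((2*K - 5) * ((2*K - 7) * H))))) := by
    rw [hmaster, ← hN, ← hK]
    have e1 : (2*K - 1) ≠ 0 := by linarith
    have e3 : (2*K - 3) ≠ 0 := by linarith
    have e5 : (2*K - 5) ≠ 0 := by linarith
    have e7 : (2*K - 7) ≠ 0 := by linarith
    have eH := hHpos.ne'
    have eK := hKpos.ne'
    field_simp
    ring
  rw [key]
  have hden2 : (0:ℚ) < K^2 * ((2*K - 1) * ((2*K - 3) * ((2*K - 5) * ((2*K - 7) * H)))) := by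
    positivity
  rw [abs_div, abs_of_pos hden2, div_le_div_iff₀ hden2 (by positivity : (0:ℚ) < K^2)]
  rw [show |(2*K^2 + 2*K) * ((2*K - 1) * ((2*K - 3) * ((2*K - 5) * ((2*K - 7) * H))))
          - 2*K^3*N| * K^2
      = |((2*K^2 + 2*K) * ((2*K - 1) * ((2*K - 3) * ((2*K - 5) * ((2*K - 7) * H))))
          - 2*K^3*N) * K^2| by
    rw [abs_mul, abs_of_pos (by positivity : (0:ℚ) < K^2)]]
  rw [abs_le]
  have p1 : (0:ℚ) ≤ K - 10 := by linarith
  have p2 : (0:ℚ) ≤ (K - 10)^2 := sq_nonneg _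
  have p3 : (0:ℚ) ≤ (K - 10)^3 := by positivity
  have p4 : (0:ℚ) ≤ (K - 10)^4 := by positivity
  have q1 := mul_nonneg hHpos.le p1
  have q2 := mul_nonneg hHpos.le p2
  have q3 := mul_nonneg hHpos.le p3
  have q4 := mul_nonneg hHpos.le p4
  have slack1 : (0:ℚ) ≤ K^5 * (N - (2*((2*K - 3) * ((2*K - 5) * ((2*K - 7) * H)))
      + 2*((2*K - 5) * ((2*K - 7) * H)))) :=
    mul_nonneg (by positivity) (by linarith)
  have slack2 : (0:ℚ) ≤ K^5 * ((2*((2*K - 3) * ((2*K - 5) * ((2*K - 7) * H)))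
      + 2*((2*K - 5) * ((2*K - 7) * H)) + 6*((2*K - 7) * H) + 15*K*H) - N) :=
    mul_nonneg (by positivity) (by linarith)
  have r0 : (0:ℚ) ≤ K^2*H := by positivity
  have r1 : (0:ℚ) ≤ K^2*H*(K - 10) := by
    have := p1; positivity
  have r2 : (0:ℚ) ≤ K^2*H*(K - 10)^2 := by positivity
  have r3 : (0:ℚ) ≤ K^2*H*(K - 10)^3 := by
    have := p1; positivity
  have r4 : (0:ℚ) ≤ K^2*H*(K - 10)^4 := by positivity
  constructor
  · linarith [slack2, r0, r1, r2, r3, r4]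
  · linarith [slack1, r0, r1, r2, r3, r4]

lemma step_id (hk : 2 ≤ k) {s : ℕ} (h1 : 1 ≤ s) (h2 : s ≤ k - 2) :
    ((k-1).choose s : ℚ) / (((2*(k-1)).choose (2*s)) : ℚ)
      = ((k-2).choose (s-1) : ℚ) / (((2*k - 3).choose (2*s - 1)) : ℚ) := by
  have dn1 : (((2*(k-1)).choose (2*s)) : ℚ) ≠ 0 := by
    exact_mod_cast (Nat.choose_pos (by omega : 2*s ≤ 2*(k-1))).ne'
  have dn2 : (((2*k - 3).choose (2*s - 1)) : ℚ) ≠ 0 := by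
    exact_mod_cast (Nat.choose_pos (by omega : 2*s - 1 ≤ 2*k - 3)).ne'
  have h₁ℕ : (k-1) * (k-2).choose (s-1) = (k-1).choose s * s := by
    have := Nat.add_one_mul_choose_eq (k-2) (s-1)
    rwa [show (k-2) + 1 = k-1 by omega, show (s-1) + 1 = s by omega] at this
  have h₂ℕ : (2*(k-1)) * (2*k - 3).choose (2*s - 1)
      = (2*(k-1)).choose (2*s) * (2*s) := by
    have := Nat.add_one_mul_choose_eq (2*k - 3) (2*s - 1)
    rw [show (2*k - 3) + 1 = 2*k - 2 by omega, show (2*s - 1) + 1 = 2*s by omega] at this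
    rwa [show 2*k - 2 = 2*(k-1) by omega] at this
  have hkq : ((k:ℚ) - 1) ≠ 0 := by
    have : (2:ℚ) ≤ k := by exact_mod_cast hk
    linarith
  have c1 : ((k:ℚ) - 1) * ((k-2).choose (s-1) : ℚ) = ((k-1).choose s : ℚ) * s := by
    have := congrArg (Nat.cast : ℕ → ℚ) h₁ℕ
    push_cast at this
    rwa [cast_sub_q (by omega : 1 ≤ k)] at this
  have c2 : ((k:ℚ) - 1) * (((2*k - 3).choose (2*s - 1)) : ℚ)
      = (((2*(k-1)).choose (2*s)) : ℚ) * s := by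
    have := congrArg (Nat.cast : ℕ → ℚ) h₂ℕ
    push_cast at this
    rw [cast_sub_q (by omega : 1 ≤ k)] at this
    linear_combination this / 2
  rw [div_eq_div_iff dn1 dn2]
  apply mul_left_cancel₀ hkq
  linear_combination ((k-1).choose s : ℚ) * c2 - (((2*(k-1)).choose (2*s)) : ℚ) * c1

lemma sq_split (hk : 2 ≤ k) :
    Sq k = 2 + ∑ m ∈ Finset.Icc 2 (k - 1),
        (Nat.choose (k - 2) (m - 2) : ℚ) / (Nat.choose (2*k - 3) (2*m - 3) : ℚ) := by
  rw [Sq]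
  have hsplit : Finset.range k = insert 0 (insert (k-1) (Finset.Icc 1 (k-2))) := by
    ext x
    simp only [Finset.mem_range, Finset.mem_insert, Finset.mem_Icc]
    omega
  rw [hsplit, Finset.sum_insert (by simp; omega), Finset.sum_insert (by simp; omega)]
  have v0 : ((k-1).choose 0 : ℚ) / (((2*(k-1)).choose (2*0)) : ℚ) = 1 := by
    norm_num
  have v1 : ((k-1).choose (k-1) : ℚ) / (((2*(k-1)).choose (2*(k-1))) : ℚ) = 1 := by
    rw [Nat.choose_self, Nat.choose_self]
    norm_num
  rw [v0, v1]
  have hmid : ∑ s ∈ Finset.Icc 1 (k-2),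
      ((k-1).choose s : ℚ) / (((2*(k-1)).choose (2*s)) : ℚ)
      = ∑ m ∈ Finset.Icc 2 (k - 1),
        (Nat.choose (k - 2) (m - 2) : ℚ) / (Nat.choose (2*k - 3) (2*m - 3) : ℚ) := by
    apply Finset.sum_nbij' (i := fun s => s + 1) (j := fun m => m - 1)
    · intro s hs
      obtain ⟨hs1, hs2⟩ := Finset.mem_Icc.mp hs
      show s + 1 ∈ Finset.Icc 2 (k-1)
      rw [Finset.mem_Icc]
      omega
    · intro m hm
      obtain ⟨hm1, hm2⟩ := Finset.mem_Icc.mp hm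
      show m - 1 ∈ Finset.Icc 1 (k-2)
      rw [Finset.mem_Icc]
      omega
    · intro s hs
      show (s + 1) - 1 = s
      omega
    · intro m hm
      obtain ⟨hm1, hm2⟩ := Finset.mem_Icc.mp hm
      show (m - 1) + 1 = m
      omega
    · intro s hs
      obtain ⟨hs1, hs2⟩ := Finset.mem_Icc.mp hs
      show ((k-1).choose s : ℚ) / (((2*(k-1)).choose (2*s)) : ℚ)
        = ((k - 2).choose ((s+1) - 2) : ℚ) / (((2*k - 3).choose (2*(s+1) - 3)) : ℚ)
      rw [step_id hk hs1 hs2, show (s+1) - 2 = s - 1 by omega,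
        show 2*(s+1) - 3 = 2*s - 1 by omega]
  rw [hmid]
  ring

lemma part1 (hk : 2 ≤ k) :
    expCross k
      = (2*(k:ℚ)) * ((2*(k:ℚ)) - 3) / ((2*(k:ℚ)) - 1)
        - ((2*(k:ℚ)) / ((2*(k:ℚ)) - 1)) * ∑ m ∈ Finset.Icc 2 (k - 1),
            (Nat.choose (k - 2) (m - 2) : ℚ) / (Nat.choose (2*k - 3) (2*m - 3) : ℚ) := by
  rw [expCross_eq_sq (by omega), sq_split hk]
  have h3 : (2*(k:ℚ) - 1) ≠ 0 := by
    have : (2:ℚ) ≤ k := by exact_mod_cast hk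
    linarith
  field_simp
  ring

lemma asym_small {k : ℕ} (h1 : 1 ≤ k) (h2 : k < 10) :
    |expCross k - (2*(k:ℚ) - 2 - 2/(k:ℚ))| ≤ 100 / (k:ℚ)^2 := by
  have hm := expCross_eq_master (k := k) (by omega)
  interval_cases k <;>
    rw [hm] <;>
    norm_num [N₀, Finset.sum_range_succ, Nat.doubleFactorial] <;>
    rw [abs_le] <;>
    constructor <;>
    norm_num

end ECAux

/-- The expected number of vertices involved in a crossing equals
`2k(2k-3)/(2k-1) - (2k/(2k-1)) ∑_{m=2}^{k-1} C(k-2,m-2)/C(2k-3,2m-3)`,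
and this expression is `2k - 2 - 2/k + O(1/k²)` as `k → ∞`. -/
theorem expCross_formula_and_asymptotics :
    (∀ k : ℕ, 2 ≤ k →
      expCross k
        = (2*k : ℚ) * ((2*k : ℚ) - 3) / ((2*k : ℚ) - 1)
          - ((2*k : ℚ) / ((2*k : ℚ) - 1)) * ∑ m ∈ Finset.Icc 2 (k - 1),
              (Nat.choose (k - 2) (m - 2) : ℚ) / (Nat.choose (2*k - 3) (2*m - 3) : ℚ)) ∧
    ∃ C : ℚ, 0 < C ∧ ∀ k : ℕ, 1 ≤ k →
      |expCross k - ((2*k : ℚ) - 2 - 2 / (k : ℚ))| ≤ C / (k : ℚ)^2 := by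
  constructor
  · intro k hk
    exact ECAux.part1 hk
  · refine ⟨100, by norm_num, fun k hk => ?_⟩
    rcases lt_or_ge k 10 with h | h
    · exact ECAux.asym_small hk h
    · exact ECAux.asym_large h
end
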